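/- arXiv:1203.5738 — 3 statements merged into one kernel-verified Lean document; each statement's English description precedes it below -/
import Mathlib

section
/- The ordinary generating function Σ_{n≥0} NCN_{2,2}(n,2) x^n counting 2-colored partitions of [n] that are both noncrossing and nonnesting equals (1 − 6x + 7x²)/(1 − 7x + 11x² − x³). -/
open Finset

/-- `IsArc P i j` : `(i,j)` is an arc of the set partition `P`. -/
def IsArc {n : ℕ} (P : Finpartition (Finset.univ : Finset (Fin n))) (i j : Fin n) : Prop :=
  i < j ∧ ∃ B ∈ P.parts, i ∈ B ∧ j ∈ B ∧ ∀ k ∈ B, i < k → j ≤ k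

/-- The set of minimal elements of blocks of `P`. -/
def blockMin {n : ℕ} (P : Finpartition (Finset.univ : Finset (Fin n))) : Set (Fin n) :=
  {i | ∃ B ∈ P.parts, i ∈ B ∧ ∀ k ∈ B, i ≤ k}

/-- The set of maximal elements of blocks of `P`. -/
def blockMax {n : ℕ} (P : Finpartition (Finset.univ : Finset (Fin n))) : Set (Fin n) :=
  {i | ∃ B ∈ P.parts, i ∈ B ∧ ∀ k ∈ B, k ≤ i}

/-- An `r`-colored partition of `[n]`. -/
structure ColoredPartition (n r : ℕ) where
  P : Finpartition (Finset.univ : Finset (Fin n))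
  color : ∀ i j : Fin n, IsArc P i j → Fin r

/-- `Λ` has a `k`-crossing: `k` same-colored arcs with
`i₁ < ⋯ < i_k < j₁ < ⋯ < j_k`. -/
def HasCrossing {n r : ℕ} (Λ : ColoredPartition n r) (k : ℕ) : Prop :=
  ∃ (f g : Fin k → Fin n) (c : Fin r),
    StrictMono f ∧ StrictMono g ∧ (∀ s t : Fin k, f s < g t) ∧
    ∀ t, ∃ h : IsArc Λ.P (f t) (g t), Λ.color (f t) (g t) h = c

/-- `Λ` has a `k`-nesting: `k` same-colored arcs with
`i₁ < ⋯ < i_k < j_k < ⋯ < j₁`. -/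
def HasNesting {n r : ℕ} (Λ : ColoredPartition n r) (k : ℕ) : Prop :=
  ∃ (f g : Fin k → Fin n) (c : Fin r),
    StrictMono f ∧ StrictAnti g ∧ (∀ s t : Fin k, f s < g t) ∧
    ∀ t, ∃ h : IsArc Λ.P (f t) (g t), Λ.color (f t) (g t) h = c

/-- Uncolored `k`-crossing. -/
def HasCrossingP {n : ℕ} (P : Finpartition (Finset.univ : Finset (Fin n))) (k : ℕ) : Prop :=
  ∃ f g : Fin k → Fin n, StrictMono f ∧ StrictMono g ∧ (∀ s t : Fin k, f s < g t) ∧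
    ∀ t, IsArc P (f t) (g t)

/-- Uncolored `k`-nesting. -/
def HasNestingP {n : ℕ} (P : Finpartition (Finset.univ : Finset (Fin n))) (k : ℕ) : Prop :=
  ∃ f g : Fin k → Fin n, StrictMono f ∧ StrictAnti g ∧ (∀ s t : Fin k, f s < g t) ∧
    ∀ t, IsArc P (f t) (g t)

/-- The crossing number of a colored partition: the largest `k` with a `k`-crossing. -/
noncomputable def crNum {n r : ℕ} (Λ : ColoredPartition n r) : ℕ :=
  sSup {k | 0 < k ∧ HasCrossing Λ k}

noncomputable def neNum {n r : ℕ} (Λ : ColoredPartition n r) : ℕ :=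
  sSup {k | 0 < k ∧ HasNesting Λ k}

noncomputable def crNumP {n : ℕ} (P : Finpartition (Finset.univ : Finset (Fin n))) : ℕ :=
  sSup {k | 0 < k ∧ HasCrossingP P k}

noncomputable def neNumP {n : ℕ} (P : Finpartition (Finset.univ : Finset (Fin n))) : ℕ :=
  sSup {k | 0 < k ∧ HasNestingP P k}

/-- A matching: all blocks have at most two elements. -/
def IsMatching {m : ℕ} (P : Finpartition (Finset.univ : Finset (Fin m))) : Prop :=
  ∀ B ∈ P.parts, B.card ≤ 2

/-- A complete matching: all blocks have exactly two elements. -/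
def IsCompleteMatching {m : ℕ} (P : Finpartition (Finset.univ : Finset (Fin m))) : Prop :=
  ∀ B ∈ P.parts, B.card = 2

/-- `i ∈ [n] ↦ 2i ∈ [2n]` (0-based: the element of 1-based value `2(i+1)-1`). -/
def dbl {n : ℕ} (i : Fin n) : Fin (2 * n) := ⟨2 * i.1, by have := i.2; omega⟩

/-- `i ∈ [n] ↦` 0-based index `2i+1` of `[2n]` (1-based value `2(i+1)`). -/
def dbl1 {n : ℕ} (i : Fin n) : Fin (2 * n) := ⟨2 * i.1 + 1, by have := i.2; omega⟩

/-- Enhanced arcs: arcs of `P` together with loops `(i,i)` at isolated points. -/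
def EnhIsArc {n : ℕ} (P : Finpartition (Finset.univ : Finset (Fin n))) (i j : Fin n) : Prop :=
  IsArc P i j ∨ (i = j ∧ i ∈ blockMin P ∧ i ∈ blockMax P)

/-- An `r`-colored enhanced partition of `[n]`. -/
structure EnhColoredPartition (n r : ℕ) where
  P : Finpartition (Finset.univ : Finset (Fin n))
  color : ∀ i j : Fin n, EnhIsArc P i j → Fin r

/-- Enhanced `k`-crossing: same-colored enhanced arcs with
`i₁ < ⋯ < i_k ≤ j₁ < ⋯ < j_k`. -/
def HasEnhCrossing {n r : ℕ} (Λ : EnhColoredPartition n r) (k : ℕ) : Prop :=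
  ∃ (f g : Fin k → Fin n) (c : Fin r),
    StrictMono f ∧ StrictMono g ∧ (∀ s t : Fin k, f s ≤ g t) ∧
    ∀ t, ∃ h : EnhIsArc Λ.P (f t) (g t), Λ.color (f t) (g t) h = c

/-- Enhanced `k`-nesting: same-colored enhanced arcs with
`i₁ < ⋯ < i_k ≤ j_k < ⋯ < j₁`. -/
def HasEnhNesting {n r : ℕ} (Λ : EnhColoredPartition n r) (k : ℕ) : Prop :=
  ∃ (f g : Fin k → Fin n) (c : Fin r),
    StrictMono f ∧ StrictAnti g ∧ (∀ s t : Fin k, f s ≤ g t) ∧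
    ∀ t, ∃ h : EnhIsArc Λ.P (f t) (g t), Λ.color (f t) (g t) h = c

noncomputable def enhCrNum {n r : ℕ} (Λ : EnhColoredPartition n r) : ℕ :=
  sSup {k | 0 < k ∧ HasEnhCrossing Λ k}

noncomputable def enhNeNum {n r : ℕ} (Λ : EnhColoredPartition n r) : ℕ :=
  sSup {k | 0 < k ∧ HasEnhNesting Λ k}

/-- The `(r+1)²` steps: `±e_i` (first summand with a sign), `e_i − e_j` for `i ≠ j`,
and `r+1` distinct zero steps. -/
def Step (r : ℕ) : Type :=
  (Fin r × Bool) ⊕ ({p : Fin r × Fin r // p.1 ≠ p.2} ⊕ Fin (r + 1))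

/-- The displacement vector of a step. -/
def stepVec {r : ℕ} : Step r → Fin r → ℤ
  | Sum.inl (i, b) => fun t => if t = i then (if b then 1 else -1) else 0
  | Sum.inr (Sum.inl p) => fun t => (if t = p.1.1 then 1 else 0) - (if t = p.1.2 then 1 else 0)
  | Sum.inr (Sum.inr _) => fun _ => 0

/-- Position after the first `k` steps of a walk started at the origin. -/
def walkPos {r m : ℕ} (w : Fin m → Step r) (k : ℕ) (t : Fin r) : ℤ :=
  ∑ i ∈ Finset.univ.filter (fun i : Fin m => i.1 < k), stepVec (w i) t

/-- The walk stays in `ℕ^r` throughout and returns to the origin. -/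
def IsClosedWalk {r m : ℕ} (w : Fin m → Step r) : Prop :=
  (∀ k : ℕ, ∀ t : Fin r, 0 ≤ walkPos w k t) ∧ ∀ t : Fin r, walkPos w m t = 0

/-- An `r`-colored permutation of `[n]`. -/
structure ColoredPerm (n r : ℕ) where
  sigma : Equiv.Perm (Fin n)
  cplus : ∀ i : Fin n, i ≤ sigma i → Fin r
  cminus : ∀ i : Fin n, sigma i < i → Fin r

/-- `k`-crossing of a colored permutation: an enhanced `k`-crossing among same-colored
upper arcs `(i, σ i)`, or an ordinary `k`-crossing among same-colored lower arcs `(σ i, i)`. -/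
def PermHasCrossing {n r : ℕ} (S : ColoredPerm n r) (k : ℕ) : Prop :=
  (∃ (f : Fin k → Fin n) (c : Fin r),
      StrictMono f ∧ StrictMono (fun t => S.sigma (f t)) ∧
      (∀ s t : Fin k, f s ≤ S.sigma (f t)) ∧
      ∀ t, ∃ h : f t ≤ S.sigma (f t), S.cplus (f t) h = c) ∨
  (∃ (f : Fin k → Fin n) (c : Fin r),
      StrictMono (fun t => S.sigma (f t)) ∧ StrictMono f ∧
      (∀ s t : Fin k, S.sigma (f s) < f t) ∧
      ∀ t, ∃ h : S.sigma (f t) < f t, S.cminus (f t) h = c)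

/-- `k`-nesting of a colored permutation. -/
def PermHasNesting {n r : ℕ} (S : ColoredPerm n r) (k : ℕ) : Prop :=
  (∃ (f : Fin k → Fin n) (c : Fin r),
      StrictMono f ∧ StrictAnti (fun t => S.sigma (f t)) ∧
      (∀ s t : Fin k, f s ≤ S.sigma (f t)) ∧
      ∀ t, ∃ h : f t ≤ S.sigma (f t), S.cplus (f t) h = c) ∨
  (∃ (f : Fin k → Fin n) (c : Fin r),
      StrictMono (fun t => S.sigma (f t)) ∧ StrictAnti f ∧
      (∀ s t : Fin k, S.sigma (f s) < f t) ∧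
      ∀ t, ∃ h : S.sigma (f t) < f t, S.cminus (f t) h = c)

/-- The number of 2-colored partitions of `[n]` that are both noncrossing
and nonnesting. -/
noncomputable def ncn222 (n : ℕ) : ℕ :=
  Nat.card {Λ : ColoredPartition n 2 // ¬HasCrossing Λ 2 ∧ ¬HasNesting Λ 2}

namespace NCN


variable {n : ℕ} {P Q : Finpartition (Finset.univ : Finset (Fin n))} {i j i' j' : Fin n}

lemma arc_right_unique (h : IsArc P i j) (h' : IsArc P i j') : j = j' := by
  obtain ⟨hij, B, hB, hiB, hjB, hmin⟩ := h
  obtain ⟨hij', B', hB', hiB', hjB', hmin'⟩ := h'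
  have hBB : B = B' := P.eq_of_mem_parts hB hB' hiB hiB'
  subst hBB
  exact le_antisymm (hmin j' hjB' hij') (hmin' j hjB hij)

lemma arc_left_unique (h : IsArc P i j) (h' : IsArc P i' j) : i = i' := by
  obtain ⟨hij, B, hB, hiB, hjB, hmin⟩ := h
  obtain ⟨hij', B', hB', hiB', hjB', hmin'⟩ := h'
  have hBB : B = B' := P.eq_of_mem_parts hB hB' hjB hjB'
  subst hBB
  by_contra hne
  rcases lt_or_gt_of_ne hne with hlt | hlt
  · exact absurd (hmin i' hiB' hlt) (not_le.2 hij')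
  · exact absurd (hmin' i hiB hlt) (not_le.2 hij)

lemma strictMono_pair {x y : Fin n} (h : x < y) : StrictMono ![x, y] := by
  intro a b hab
  fin_cases a <;> fin_cases b <;> first
    | exact absurd hab (by decide)
    | simpa using h

lemma strictAnti_pair {x y : Fin n} (h : y < x) : StrictAnti ![x, y] := by
  intro a b hab
  fin_cases a <;> fin_cases b <;> first
    | exact absurd hab (by decide)
    | simpa using h

/-- key sequentiality: same-colored arcs do not overlap -/
lemma seq_of_good {Λ : ColoredPartition n 2} (hG : ¬HasCrossing Λ 2 ∧ ¬HasNesting Λ 2)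
    (h1 : IsArc Λ.P i j) (h2 : IsArc Λ.P i' j')
    (hc : Λ.color i j h1 = Λ.color i' j' h2) (hlt : i < i') : j ≤ i' := by
  by_contra hgt
  push_neg at hgt
  have hjj : j ≠ j' := by
    intro e; subst e; exact absurd (arc_left_unique h1 h2) (ne_of_lt hlt)
  have hij' : i < j' := lt_trans hlt h2.1
  rcases lt_or_gt_of_ne hjj with hlt2 | hlt2
  · -- crossing : i < i' < j < j'
    refine hG.1 ⟨![i, i'], ![j, j'], Λ.color i j h1, strictMono_pair hlt, strictMono_pair hlt2,
      ?_, ?_⟩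
    · intro s t
      fin_cases s <;> fin_cases t <;>
        simp only [Matrix.cons_val_zero, Matrix.cons_val_one, Matrix.head_cons]
      · exact h1.1
      · exact hij'
      · exact hgt
      · exact h2.1
    · intro t
      refine Fin.cases ?_ (fun t' => ?_) t
      · exact ⟨h1, rfl⟩
      · have : t' = 0 := Subsingleton.elim _ _
        subst this
        exact ⟨h2, hc.symm⟩
  · -- nesting : i < i' < j' < j
    refine hG.2 ⟨![i, i'], ![j, j'], Λ.color i j h1, strictMono_pair hlt, strictAnti_pair hlt2,
      ?_, ?_⟩
    · intro s t
      fin_cases s <;> fin_cases t <;>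
        simp only [Matrix.cons_val_zero, Matrix.cons_val_one, Matrix.head_cons]
      · exact h1.1
      · exact hij'
      · exact hgt
      · exact h2.1
    · intro t
      refine Fin.cases ?_ (fun t' => ?_) t
      · exact ⟨h1, rfl⟩
      · have : t' = 0 := Subsingleton.elim _ _
        subst this
        exact ⟨h2, hc.symm⟩

/-- same-block relation -/
def sb (P : Finpartition (Finset.univ : Finset (Fin n))) (i j : Fin n) : Prop :=
  ∃ B ∈ P.parts, i ∈ B ∧ j ∈ B

lemma sb_refl (i : Fin n) : sb P i i := by
  obtain ⟨B, hB, hiB⟩ := P.exists_mem (mem_univ i)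
  exact ⟨B, hB, hiB, hiB⟩

lemma sb_symm (h : sb P i j) : sb P j i := by
  obtain ⟨B, hB, h1, h2⟩ := h; exact ⟨B, hB, h2, h1⟩

lemma sb_trans {k : Fin n} (h : sb P i j) (h' : sb P j k) : sb P i k := by
  obtain ⟨B, hB, h1, h2⟩ := h
  obtain ⟨B', hB', h3, h4⟩ := h'
  have : B = B' := P.eq_of_mem_parts hB hB' h2 h3
  subst this
  exact ⟨B, hB, h1, h4⟩

lemma sb_of_arc (h : IsArc P i j) : sb P i j := by
  obtain ⟨_, B, hB, h1, h2, _⟩ := h; exact ⟨B, hB, h1, h2⟩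

lemma exists_arc_succ {B : Finset (Fin n)} (hB : B ∈ P.parts) (hi : i ∈ B) (hj : j ∈ B)
    (hij : i < j) : ∃ m, IsArc P i m ∧ m ∈ B ∧ m ≤ j := by
  classical
  have hne : (B.filter (fun k => i < k)).Nonempty := ⟨j, mem_filter.2 ⟨hj, hij⟩⟩
  set m := (B.filter (fun k => i < k)).min' hne with hm
  have hmB := mem_filter.1 ((B.filter (fun k => i < k)).min'_mem hne)
  refine ⟨m, ⟨hmB.2, B, hB, hi, hmB.1, fun k hk hik => ?_⟩, hmB.1, ?_⟩
  · exact Finset.min'_le _ _ (mem_filter.2 ⟨hk, hik⟩)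
  · exact Finset.min'_le _ _ (mem_filter.2 ⟨hj, hij⟩)

lemma sb_mono_arc (harc : ∀ a b : Fin n, IsArc P a b → IsArc Q a b) :
    ∀ a b : Fin n, sb P a b → sb Q a b := by
  suffices H : ∀ d : ℕ, ∀ a b : Fin n, b.1 - a.1 ≤ d → a ≤ b → sb P a b → sb Q a b by
    intro a b hab
    rcases le_total a b with h | h
    · exact H n a b (by first | omega | (simp only [Fin.val_mk] at *; omega)) h hab
    · exact sb_symm (H n b a (by first | omega | (simp only [Fin.val_mk] at *; omega)) h (sb_symm hab))
  intro d
  induction d with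
  | zero =>
    intro a b hd hab _
    have : a = b := le_antisymm hab (by exact Fin.le_def.2 (by first | omega | (simp only [Fin.val_mk] at *; omega)))
    subst this; exact sb_refl a
  | succ d ih =>
    intro a b hd hab hPab
    rcases eq_or_lt_of_le hab with rfl | hlt
    · exact sb_refl a
    · obtain ⟨B, hB, haB, hbB⟩ := hPab
      obtain ⟨m, harcm, hmB, hmb⟩ := exists_arc_succ hB haB hbB hlt
      have ham : a < m := harcm.1
      have h1 : sb Q a m := sb_of_arc (harc a m harcm)
      have h2 : sb Q m b := ih m b (by
        have := Fin.lt_def.1 ham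
        have := Fin.le_def.1 hmb
        omega) hmb ⟨B, hB, hmB, hbB⟩
      exact sb_trans h1 h2

lemma parts_eq_of_arc_iff (h : ∀ a b : Fin n, IsArc P a b ↔ IsArc Q a b) : P = Q := by
  have hsb : ∀ a b : Fin n, sb P a b ↔ sb Q a b := by
    intro a b
    exact ⟨fun hh => sb_mono_arc (fun x y => (h x y).1) a b hh,
      fun hh => sb_mono_arc (fun x y => (h x y).2) a b hh⟩
  have key : ∀ (R S : Finpartition (Finset.univ : Finset (Fin n))),
      (∀ a b : Fin n, sb R a b ↔ sb S a b) → R.parts ⊆ S.parts := by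
    intro R S hRS B hB
    obtain ⟨x, hxB⟩ := R.nonempty_of_mem_parts hB
    have hBeq : B = S.part x := by
      ext y
      constructor
      · intro hyB
        have : sb S x y := (hRS x y).1 ⟨B, hB, hxB, hyB⟩
        obtain ⟨B', hB', hxB', hyB'⟩ := this
        exact (S.part_eq_of_mem hB' hxB').symm ▸ hyB'
      · intro hy
        have hrel : sb S x y := ⟨S.part x, S.part_mem.2 (mem_univ x), S.mem_part_self.2 (mem_univ x), hy⟩
        obtain ⟨B', hB', h1, h2⟩ := (hRS x y).2 hrel
        have : B' = B := R.eq_of_mem_parts hB' hB h1 hxB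
        exact this ▸ h2
    rw [hBeq]
    exact S.part_mem.2 (mem_univ x)
  exact Finpartition.ext (Finset.Subset.antisymm (key P Q hsb)
    (key Q P (fun a b => (hsb a b).symm)))


abbrev St := Bool × Bool
abbrev Letter := Option (Fin 2) × Option (Fin 2)

def cget (s : St) (c : Fin 2) : Bool := if c = 0 then s.1 else s.2
def cset (s : St) (c : Fin 2) (b : Bool) : St := if c = 0 then (b, s.2) else (s.1, b)

def stepFn (s : St) (ℓ : Letter) : Option St :=
  (match ℓ.1 with
    | none => some s
    | some c => if cget s c then some (cset s c false) else none).bind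
  fun s' => match ℓ.2 with
    | none => some s'
    | some c => if cget s' c then none else some (cset s' c true)

def start : St := (false, false)

section Word

variable {n : ℕ} {i j : Fin n} {c : Fin 2}

open Classical in
noncomputable def openO (Λ : ColoredPartition n 2) (i : Fin n) : Option (Fin 2) :=
  if h : ∃ j, IsArc Λ.P i j then some (Λ.color i h.choose h.choose_spec) else none

open Classical in
noncomputable def closeO (Λ : ColoredPartition n 2) (i : Fin n) : Option (Fin 2) :=
  if h : ∃ j, IsArc Λ.P j i then some (Λ.color h.choose i h.choose_spec) else none

noncomputable def wordOf (Λ : ColoredPartition n 2) : Fin n → Letter :=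
  fun i => (closeO Λ i, openO Λ i)

lemma openO_eq (Λ : ColoredPartition n 2) (h : IsArc Λ.P i j) :
    openO Λ i = some (Λ.color i j h) := by
  have hex : ∃ j', IsArc Λ.P i j' := ⟨j, h⟩
  rw [openO, dif_pos hex]
  have e : hex.choose = j := arc_right_unique hex.choose_spec h
  congr 1
  subst e
  rfl

lemma closeO_eq (Λ : ColoredPartition n 2) (h : IsArc Λ.P i j) :
    closeO Λ j = some (Λ.color i j h) := by
  have hex : ∃ i', IsArc Λ.P i' j := ⟨i, h⟩
  rw [closeO, dif_pos hex]
  have e : hex.choose = i := arc_left_unique hex.choose_spec h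
  congr 1
  subst e
  rfl

lemma openO_some {Λ : ColoredPartition n 2} (hc : openO Λ i = some c) :
    ∃ j, ∃ h : IsArc Λ.P i j, Λ.color i j h = c := by
  by_cases hex : ∃ j, IsArc Λ.P i j
  · rw [openO, dif_pos hex] at hc
    exact ⟨hex.choose, hex.choose_spec, Option.some_injective _ hc⟩
  · rw [openO, dif_neg hex] at hc
    exact absurd hc (by simp)

lemma closeO_some {Λ : ColoredPartition n 2} (hc : closeO Λ i = some c) :
    ∃ j, ∃ h : IsArc Λ.P j i, Λ.color j i h = c := by
  by_cases hex : ∃ j, IsArc Λ.P j i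
  · rw [closeO, dif_pos hex] at hc
    exact ⟨hex.choose, hex.choose_spec, Option.some_injective _ hc⟩
  · rw [closeO, dif_neg hex] at hc
    exact absurd hc (by simp)

def spanP (Λ : ColoredPartition n 2) (k : ℕ) (c : Fin 2) : Prop :=
  ∃ i j, ∃ h : IsArc Λ.P i j, i.1 < k ∧ k ≤ j.1 ∧ Λ.color i j h = c

open Classical in
noncomputable def flg (Λ : ColoredPartition n 2) (k : ℕ) : St :=
  (if spanP Λ k 0 then true else false, if spanP Λ k 1 then true else false)

open Classical in
lemma cget_flg (Λ : ColoredPartition n 2) (k : ℕ) (c : Fin 2) :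
    cget (flg Λ k) c = if spanP Λ k c then true else false := by
  fin_cases c <;> rfl

variable {Λ : ColoredPartition n 2}

lemma span_of_close {k : ℕ} (hk : k < n) (hcl : closeO Λ ⟨k, hk⟩ = some c) : spanP Λ k c := by
  obtain ⟨i₀, h₀, hc₀⟩ := closeO_some hcl
  exact ⟨i₀, ⟨k, hk⟩, h₀, Fin.lt_def.1 h₀.1, le_rfl, hc₀⟩

lemma close_of_open_span (hG : ¬HasCrossing Λ 2 ∧ ¬HasNesting Λ 2) {k : ℕ} (hk : k < n)
    (hop : openO Λ ⟨k, hk⟩ = some c) (hsp : spanP Λ k c) : closeO Λ ⟨k, hk⟩ = some c := by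
  obtain ⟨j', h', hc'⟩ := openO_some hop
  obtain ⟨i, j, h, hik, hkj, hcol⟩ := hsp
  have hlt : i < (⟨k, hk⟩ : Fin n) := Fin.lt_def.2 hik
  have hle := seq_of_good hG h h' (hcol.trans hc'.symm) hlt
  have : j = ⟨k, hk⟩ := Fin.ext (le_antisymm (Fin.le_def.1 hle) hkj)
  subst this
  rw [closeO_eq Λ h, hcol]

lemma span_succ (hG : ¬HasCrossing Λ 2 ∧ ¬HasNesting Λ 2) {k : ℕ} (hk : k < n) (c : Fin 2) :
    spanP Λ (k+1) c ↔
      openO Λ ⟨k, hk⟩ = some c ∨ (spanP Λ k c ∧ closeO Λ ⟨k, hk⟩ ≠ some c) := by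
  constructor
  · rintro ⟨i, j, h, hik, hkj, hcol⟩
    rcases Nat.lt_or_ge i.1 k with hik' | hik'
    · right
      refine ⟨⟨i, j, h, hik', by omega, hcol⟩, ?_⟩
      intro hcl
      obtain ⟨i₀, h₀, hc₀⟩ := closeO_some hcl
      rcases lt_trichotomy i₀ i with hlt | heq | hlt
      · have := seq_of_good hG h₀ h (hc₀.trans hcol.symm) hlt
        have h9 := Fin.le_def.1 this
        simp only [Fin.val_mk] at h9
        omega
      · subst heq
        have e : j = ⟨k, hk⟩ := arc_right_unique h h₀
        have : j.1 = k := by rw [e]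
        omega
      · have hle := seq_of_good hG h h₀ (hcol.trans hc₀.symm) hlt
        have h2 := Fin.lt_def.1 h₀.1
        have h9 := Fin.le_def.1 hle
        simp only [Fin.val_mk] at h2 h9 ⊢
        omega
    · have : i = ⟨k, hk⟩ := Fin.ext (by first | omega | (simp only [Fin.val_mk] at *; omega))
      subst this
      left
      rw [openO_eq Λ h, hcol]
  · rintro (hop | ⟨⟨i, j, h, hik, hkj, hcol⟩, hcl⟩)
    · obtain ⟨j, h, hc⟩ := openO_some hop
      have h2 := Fin.lt_def.1 h.1
      simp only [Fin.val_mk] at h2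
      exact ⟨⟨k, hk⟩, j, h, by simp only [Fin.val_mk]; omega, by omega, hc⟩
    · refine ⟨i, j, h, by omega, ?_, hcol⟩
      rcases Nat.lt_or_ge k j.1 with h' | h'
      · omega
      · exfalso
        have : j = ⟨k, hk⟩ := Fin.ext (by first | omega | (simp only [Fin.val_mk] at *; omega))
        subst this
        exact hcl ((closeO_eq Λ h).trans (by rw [hcol]))

lemma flg_succ_cget (hG : ¬HasCrossing Λ 2 ∧ ¬HasNesting Λ 2) {k : ℕ} (hk : k < n) (c : Fin 2) :
    cget (flg Λ (k+1)) c =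
      if openO Λ ⟨k, hk⟩ = some c then true
      else if closeO Λ ⟨k, hk⟩ = some c then false
      else cget (flg Λ k) c := by
  by_cases hop : openO Λ ⟨k, hk⟩ = some c
  · rw [cget_flg, if_pos ((span_succ hG hk c).2 (Or.inl hop)), if_pos hop]
  · by_cases hcl : closeO Λ ⟨k, hk⟩ = some c
    · have hns : ¬ spanP Λ (k+1) c := by
        intro hs
        rcases (span_succ hG hk c).1 hs with h | h
        · exact hop h
        · exact h.2 hcl
      rw [cget_flg, if_neg hns, if_neg hop, if_pos hcl]
    · have hiff : spanP Λ (k+1) c ↔ spanP Λ k c := by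
        rw [span_succ hG hk c]
        simp [hop, hcl]
      rw [cget_flg, if_neg hop, if_neg hcl, cget_flg]
      by_cases hs : spanP Λ k c
      · rw [if_pos (hiff.2 hs), if_pos hs]
      · rw [if_neg (fun hh => hs (hiff.1 hh)), if_neg hs]

lemma stepFn_eq_some : ∀ (s s'' : St) (ℓ : Letter),
    (∀ c, ℓ.1 = some c → cget s c = true) →
    (∀ c, ℓ.2 = some c → (ℓ.1 = some c ∨ cget s c = false)) →
    (∀ c, cget s'' c =
      if ℓ.2 = some c then true else if ℓ.1 = some c then false else cget s c) →
    stepFn s ℓ = some s'' := by decide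

lemma step_flg (hG : ¬HasCrossing Λ 2 ∧ ¬HasNesting Λ 2) {k : ℕ} (hk : k < n) :
    stepFn (flg Λ k) (wordOf Λ ⟨k, hk⟩) = some (flg Λ (k+1)) := by
  apply stepFn_eq_some
  · intro c hcl
    rw [cget_flg, if_pos (span_of_close hk hcl)]
  · intro c hop
    by_cases hcl : closeO Λ ⟨k, hk⟩ = some c
    · exact Or.inl hcl
    · right
      rw [cget_flg, if_neg (fun hs => hcl (close_of_open_span hG hk hop hs))]
  · exact fun c => flg_succ_cget hG hk c

end Word


def stFrom {n : ℕ} (s : St) (w : Fin n → Letter) : ℕ → Option St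
  | 0 => some s
  | k+1 => if h : k < n then (stFrom s w k).bind (fun s' => stepFn s' (w ⟨k, h⟩)) else none

section Valid

variable {n : ℕ} {i j : Fin n} {c : Fin 2} {Λ Λ' : ColoredPartition n 2}

lemma flg_zero (Λ : ColoredPartition n 2) : flg Λ 0 = start := by
  have h : ∀ c, ¬ spanP Λ 0 c := by rintro c ⟨i, j, h, hik, -⟩; omega
  simp [flg, h 0, h 1, start]

lemma flg_n (Λ : ColoredPartition n 2) : flg Λ n = start := by
  have h : ∀ c, ¬ spanP Λ n c := by
    rintro c ⟨i, j, h, -, hkj, -⟩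
    exact absurd hkj (by have := j.2; omega)
  simp [flg, h 0, h 1, start]

lemma stFrom_wordOf (hG : ¬HasCrossing Λ 2 ∧ ¬HasNesting Λ 2) :
    ∀ k, k ≤ n → stFrom start (wordOf Λ) k = some (flg Λ k) := by
  intro k
  induction k with
  | zero => rw [stFrom, flg_zero]; exact fun _ => rfl
  | succ k ih =>
    intro hk
    rw [stFrom, dif_pos (by omega : k < n), ih (by omega), Option.bind_some]
    exact step_flg hG (by omega)

lemma valid_wordOf (hG : ¬HasCrossing Λ 2 ∧ ¬HasNesting Λ 2) :
    stFrom start (wordOf Λ) n = some start := by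
  rw [stFrom_wordOf hG n le_rfl, flg_n]

lemma close_min (hG : ¬HasCrossing Λ 2 ∧ ¬HasNesting Λ 2) (h : IsArc Λ.P i j) :
    ∀ p : Fin n, i < p → p < j → closeO Λ p ≠ some (Λ.color i j h) := by
  intro p hip hpj hcl
  obtain ⟨i₀, h₀, hc₀⟩ := closeO_some hcl
  rcases lt_trichotomy i₀ i with hlt | heq | hlt
  · exact absurd hip (not_lt.2 (seq_of_good hG h₀ h (hc₀.trans rfl) hlt))
  · subst heq
    exact absurd (arc_right_unique h₀ h) (ne_of_lt hpj)
  · have := seq_of_good hG h h₀ (by rw [hc₀]) hlt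
    exact absurd (lt_of_le_of_lt this h₀.1) (lt_irrefl j ∘ fun hh => lt_trans hh hpj)

lemma wordOf_inj (hG : ¬HasCrossing Λ 2 ∧ ¬HasNesting Λ 2)
    (hG' : ¬HasCrossing Λ' 2 ∧ ¬HasNesting Λ' 2)
    (hw : wordOf Λ = wordOf Λ') : Λ = Λ' := by
  have hcl : ∀ i : Fin n, closeO Λ i = closeO Λ' i :=
    fun i => congrArg Prod.fst (congrFun hw i)
  have hop : ∀ i : Fin n, openO Λ i = openO Λ' i :=
    fun i => congrArg Prod.snd (congrFun hw i)
  have harc : ∀ {A B : ColoredPartition n 2},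
      (¬HasCrossing A 2 ∧ ¬HasNesting A 2) → (¬HasCrossing B 2 ∧ ¬HasNesting B 2) →
      (∀ i : Fin n, closeO A i = closeO B i) → (∀ i : Fin n, openO A i = openO B i) →
      ∀ i j : Fin n, ∀ h : IsArc A.P i j,
        ∃ h' : IsArc B.P i j, B.color i j h' = A.color i j h := by
    intro A B hA hB hclAB hopAB i j h
    set c := A.color i j h with hc
    have ho : openO B i = some c := (hopAB i).symm.trans (openO_eq A h)
    obtain ⟨j₂, h₂, hc₂⟩ := openO_some ho
    have hjj : j₂ = j := by
      rcases lt_trichotomy j₂ j with hlt | heq | hlt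
      · have e : closeO A j₂ = some c :=
          (hclAB j₂).trans ((closeO_eq B h₂).trans (by rw [hc₂]))
        exact absurd e (close_min hA h j₂ h₂.1 hlt)
      · exact heq
      · have e : closeO B j = some c := (hclAB j).symm.trans (closeO_eq A h)
        have := close_min hB h₂ j h.1 hlt
        rw [hc₂] at this
        exact absurd e this
    subst hjj
    exact ⟨h₂, hc₂⟩
  have hiff : ∀ a b : Fin n, IsArc Λ.P a b ↔ IsArc Λ'.P a b := by
    intro a b
    constructor
    · intro h; exact (harc hG hG' hcl hop a b h).choose
    · intro h
      exact (harc hG' hG (fun i => (hcl i).symm) (fun i => (hop i).symm) a b h).choose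
  obtain ⟨P1, col1⟩ := Λ
  obtain ⟨P2, col2⟩ := Λ'
  have hP : P1 = P2 := parts_eq_of_arc_iff hiff
  subst hP
  have hcol : col1 = col2 := by
    funext i j h
    obtain ⟨h', e⟩ := harc hG hG' hcl hop i j h
    exact e.symm
  rw [hcol]

end Valid


section Recon

variable {n : ℕ}

lemma stepFn_spec : ∀ (s s'' : St) (ℓ : Letter), stepFn s ℓ = some s'' →
    (∀ c, ℓ.1 = some c → cget s c = true) ∧
    (∀ c, ℓ.2 = some c → (ℓ.1 = some c ∨ cget s c = false)) ∧
    (∀ c, cget s'' c =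
      if ℓ.2 = some c then true else if ℓ.1 = some c then false else cget s c) := by
  decide

lemma cget_start (c : Fin 2) : cget start c = false := by fin_cases c <;> rfl

lemma stFrom_le_some {w : Fin n → Letter} {s : St} :
    ∀ {m : ℕ}, (∃ x, stFrom s w m = some x) → ∀ k ≤ m, ∃ y, stFrom s w k = some y := by
  intro m
  induction m with
  | zero =>
    intro h k hk
    exact (Nat.le_zero.1 hk) ▸ h
  | succ m ih =>
    rintro ⟨x, h⟩ k hk
    rw [stFrom] at h
    by_cases hm : m < n
    · rw [dif_pos hm] at h
      obtain ⟨y, hy, hstep⟩ := Option.bind_eq_some_iff.1 h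
      rcases Nat.lt_or_ge k (m+1) with hk' | hk'
      · exact ih ⟨y, hy⟩ k (by omega)
      · have : k = m + 1 := by omega
        subst this
        refine ⟨x, ?_⟩
        rw [stFrom, dif_pos hm, hy, Option.bind_some, hstep]
    · rw [dif_neg hm] at h
      exact absurd h (by simp)

variable (w : Fin n → Letter)

noncomputable def stt (k : ℕ) : St := (stFrom start w k).getD start

variable {w}

lemma stt_eq (hv : stFrom start w n = some start) {k : ℕ} (hk : k ≤ n) :
    stFrom start w k = some (stt w k) := by
  obtain ⟨y, hy⟩ := stFrom_le_some ⟨start, hv⟩ k hk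
  rw [stt, hy]
  rfl

lemma stt_n (hv : stFrom start w n = some start) : stt w n = start := by
  have := stt_eq hv (le_rfl)
  rw [hv] at this
  exact (Option.some_injective _ this).symm

lemma stt_zero : stt w 0 = start := rfl

lemma stt_step (hv : stFrom start w n = some start) (p : Fin n) :
    stepFn (stt w p.1) (w p) = some (stt w (p.1 + 1)) := by
  have h1 := stt_eq hv (le_of_lt p.2)
  have h2 := stt_eq hv (Nat.succ_le_of_lt p.2)
  rw [stFrom, dif_pos p.2, h1, Option.bind_some] at h2
  rwa [Fin.eta] at h2

lemma S1 (hv : stFrom start w n = some start) {p : Fin n} {c : Fin 2}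
    (h : (w p).1 = some c) : cget (stt w p.1) c = true :=
  (stepFn_spec _ _ _ (stt_step hv p)).1 c h

lemma S4 (hv : stFrom start w n = some start) {p : Fin n} {c : Fin 2}
    (h : (w p).2 = some c) : (w p).1 = some c ∨ cget (stt w p.1) c = false :=
  (stepFn_spec _ _ _ (stt_step hv p)).2.1 c h

lemma S3 (hv : stFrom start w n = some start) (p : Fin n) (c : Fin 2) :
    cget (stt w (p.1 + 1)) c =
      if (w p).2 = some c then true
      else if (w p).1 = some c then false
      else cget (stt w p.1) c :=
  (stepFn_spec _ _ _ (stt_step hv p)).2.2 c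

lemma flag_stay (hv : stFrom start w n = some start) {c : Fin 2} :
    ∀ (k m : ℕ), k ≤ m → m ≤ n → cget (stt w k) c = true →
    (∀ p : Fin n, k ≤ p.1 → p.1 < m → (w p).1 ≠ some c) → cget (stt w m) c = true := by
  intro k m
  induction m with
  | zero =>
    intro hkm _ hflag _
    exact (Nat.le_zero.1 hkm) ▸ hflag
  | succ m ih =>
    intro hkm hmn hflag hnc
    rcases Nat.lt_or_ge m k with hm | hm
    · have : k = m + 1 := by omega
      exact this ▸ hflag
    · have hmlt : m < n := by omega
      have hmem : cget (stt w m) c = true :=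
        ih hm (by omega) hflag (fun p h1 h2 => hnc p h1 (by omega))
      have h3 := S3 hv ⟨m, hmlt⟩ c
      simp only [Fin.val_mk] at h3  -- maybe not needed
      rw [h3, hmem]
      have hncm : (w ⟨m, hmlt⟩).1 ≠ some c := hnc ⟨m, hmlt⟩ (by simpa using hm) (by simp)
      by_cases hopm : (w ⟨m, hmlt⟩).2 = some c
      · rw [if_pos hopm]
      · rw [if_neg hopm, if_neg hncm]

lemma exists_close (hv : stFrom start w n = some start) {i : Fin n} {c : Fin 2}
    (hc : (w i).2 = some c) : ∃ j : Fin n, i < j ∧ (w j).1 = some c := by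
  by_contra hcon
  push_neg at hcon
  have h1 : cget (stt w (i.1 + 1)) c = true := by
    rw [S3 hv i c, if_pos hc]
  have h2 : cget (stt w n) c = true := by
    refine flag_stay hv (i.1+1) n i.2 le_rfl h1 ?_
    intro p hp1 _ hp
    exact absurd hp (hcon p (Fin.lt_def.2 (by omega)))
  rw [stt_n hv, cget_start] at h2
  exact Bool.false_ne_true h2

lemma exists_open_before (hv : stFrom start w n = some start) {c : Fin 2} :
    ∀ (m : ℕ), m ≤ n → cget (stt w m) c = true →
    ∃ i : Fin n, i.1 < m ∧ (w i).2 = some c ∧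
      ∀ p : Fin n, i < p → p.1 < m → (w p).1 ≠ some c := by
  intro m
  induction m with
  | zero =>
    intro _ hflag
    rw [stt_zero, cget_start] at hflag
    exact absurd hflag Bool.false_ne_true
  | succ m ih =>
    intro hmn hflag
    have hmlt : m < n := by omega
    have h3 := S3 hv ⟨m, hmlt⟩ c
    simp only [Fin.val_mk] at h3
    rw [h3] at hflag
    by_cases hopm : (w ⟨m, hmlt⟩).2 = some c
    · refine ⟨⟨m, hmlt⟩, by simp, hopm, ?_⟩
      intro p hp1 hp2
      have := Fin.lt_def.1 hp1
      simp only [Fin.val_mk] at this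
      omega
    · rw [if_neg hopm] at hflag
      by_cases hclm : (w ⟨m, hmlt⟩).1 = some c
      · rw [if_pos hclm] at hflag
        exact absurd hflag Bool.false_ne_true
      · rw [if_neg hclm] at hflag
        obtain ⟨i, hi1, hi2, hi3⟩ := ih (by omega) hflag
        refine ⟨i, by omega, hi2, ?_⟩
        intro p hp1 hp2
        rcases Nat.lt_or_ge p.1 m with hp | hp
        · exact hi3 p hp1 hp
        · have : p = ⟨m, hmlt⟩ := Fin.ext (by simp; omega)
          exact this ▸ hclm

end Recon


section Recon2

variable {n : ℕ}

def nxtRel (w : Fin n → Letter) (i j : Fin n) : Prop :=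
  ∃ c, (w i).2 = some c ∧ (w j).1 = some c ∧ i < j ∧
    ∀ p : Fin n, i < p → p < j → (w p).1 ≠ some c

variable {w : Fin n → Letter}

lemma nxt_exists (hv : stFrom start w n = some start) {i : Fin n} {c : Fin 2}
    (hc : (w i).2 = some c) : ∃ j, nxtRel w i j := by
  classical
  have hne : (univ.filter (fun k : Fin n => i < k ∧ (w k).1 = some c)).Nonempty := by
    obtain ⟨j, h1, h2⟩ := exists_close hv hc
    exact ⟨j, mem_filter.2 ⟨mem_univ j, h1, h2⟩⟩
  set T := univ.filter (fun k : Fin n => i < k ∧ (w k).1 = some c) with hT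
  have hmem := mem_filter.1 (T.min'_mem hne)
  refine ⟨T.min' hne, c, hc, hmem.2.2, hmem.2.1, ?_⟩
  intro p hp1 hp2 hp3
  have : T.min' hne ≤ p := Finset.min'_le _ _ (mem_filter.2 ⟨mem_univ p, hp1, hp3⟩)
  exact absurd hp2 (not_lt.2 this)

lemma nxt_func {i j j' : Fin n} (h : nxtRel w i j) (h' : nxtRel w i j') : j = j' := by
  obtain ⟨c, hc1, hc2, hc3, hc4⟩ := h
  obtain ⟨c', hc1', hc2', hc3', hc4'⟩ := h'
  have : c = c' := Option.some_injective _ (hc1.symm.trans hc1')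
  subst this
  rcases lt_trichotomy j j' with hlt | heq | hlt
  · exact absurd hc2 (hc4' j hc3 hlt)
  · exact heq
  · exact absurd hc2' (hc4 j' hc3' hlt)

lemma nxt_noov (hv : stFrom start w n = some start) {i i' j : Fin n} {c : Fin 2}
    (h : nxtRel w i j) (hci : (w i).2 = some c) (hci' : (w i').2 = some c)
    (hlt : i < i') : j ≤ i' := by
  obtain ⟨c₀, hc1, hc2, hc3, hc4⟩ := h
  have e : c₀ = c := Option.some_injective _ (hc1.symm.trans hci)
  rw [e] at hc2 hc4
  by_contra hcon
  push_neg at hcon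
  by_cases hcl : (w i').1 = some c
  · exact hc4 i' hlt hcon hcl
  · rcases S4 hv hci' with h' | h'
    · exact hcl h'
    · have htrue : cget (stt w i'.1) c = true := by
        refine flag_stay hv (i.1+1) i'.1 (Fin.lt_def.1 hlt) (le_of_lt i'.2) ?_ ?_
        · rw [S3 hv i c, if_pos hci]
        · intro p hp1 hp2
          exact hc4 p (Fin.lt_def.2 (by omega)) (lt_trans (Fin.lt_def.2 hp2) hcon)
      rw [h'] at htrue
      exact Bool.false_ne_true htrue

lemma nxt_inj (hv : stFrom start w n = some start) {i i' j : Fin n}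
    (h : nxtRel w i j) (h' : nxtRel w i' j) : i = i' := by
  obtain ⟨c, hc1, hc2, hc3, hc4⟩ := h
  obtain ⟨c', hc1', hc2', hc3', hc4'⟩ := h'
  have hcc : c = c' := Option.some_injective _ (hc2.symm.trans hc2')
  subst hcc
  rcases lt_trichotomy i i' with hlt | heq | hlt
  · have := nxt_noov hv ⟨c, hc1, hc2, hc3, hc4⟩ hc1 hc1' hlt
    exact absurd hc3' (not_lt.2 this)
  · exact heq
  · have := nxt_noov hv ⟨c, hc1', hc2', hc3', hc4'⟩ hc1' hc1 hlt
    exact absurd hc3 (not_lt.2 this)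

lemma close_has_open (hv : stFrom start w n = some start) {j : Fin n} {c : Fin 2}
    (hc : (w j).1 = some c) : ∃ i, nxtRel w i j := by
  have h1 : cget (stt w j.1) c = true := S1 hv hc
  obtain ⟨i, hi1, hi2, hi3⟩ := exists_open_before hv j.1 (le_of_lt j.2) h1
  refine ⟨i, c, hi2, hc, Fin.lt_def.2 hi1, ?_⟩
  intro p hp1 hp2
  exact hi3 p hp1 (Fin.lt_def.1 hp2)

lemma rtg_le {a b : Fin n} (h : Relation.ReflTransGen (nxtRel w) a b) : a ≤ b := by
  induction h with
  | refl => exact le_rfl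
  | tail _ h2 ih =>
    obtain ⟨_, _, _, hlt', _⟩ := h2
    exact le_trans ih (le_of_lt hlt')

lemma rtg_det (h : Relation.ReflTransGen (nxtRel w) a b)
    (h' : Relation.ReflTransGen (nxtRel w) a c) :
    Relation.ReflTransGen (nxtRel w) b c ∨ Relation.ReflTransGen (nxtRel w) c b :=
  Relation.ReflTransGen.total_of_right_unique (fun _ _ _ => nxt_func) h h'

lemma rtg_codet (hv : stFrom start w n = some start) {a b c : Fin n}
    (h : Relation.ReflTransGen (nxtRel w) a b)
    (h' : Relation.ReflTransGen (nxtRel w) c b) :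
    Relation.ReflTransGen (nxtRel w) a c ∨ Relation.ReflTransGen (nxtRel w) c a := by
  induction h using Relation.ReflTransGen.head_induction_on with
  | refl => exact Or.inr h'
  | head hstep _ ih =>
    rename_i a a₁ _
    rcases ih with hac | hca
    · exact Or.inl (Relation.ReflTransGen.head hstep hac)
    · rcases Relation.ReflTransGen.cases_tail hca with heq | ⟨d, hcd, hda⟩
      · exact Or.inl (Relation.ReflTransGen.single (heq ▸ hstep))
      · have : d = a := nxt_inj hv hda hstep
        exact Or.inr (this ▸ hcd)

lemma eqv_iff (hv : stFrom start w n = some start) {a b : Fin n} :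
    Relation.EqvGen (nxtRel w) a b ↔
      Relation.ReflTransGen (nxtRel w) a b ∨ Relation.ReflTransGen (nxtRel w) b a := by
  constructor
  · intro h
    induction h with
    | rel x y hxy => exact Or.inl (Relation.ReflTransGen.single hxy)
    | refl x => exact Or.inl Relation.ReflTransGen.refl
    | symm x y _ ih => exact ih.symm
    | trans x y z _ _ ih1 ih2 =>
      rcases ih1 with h1 | h1 <;> rcases ih2 with h2 | h2
      · exact Or.inl (h1.trans h2)
      · exact rtg_codet hv h1 h2
      · rcases rtg_det h1 h2 with h3 | h3
        · exact Or.inl h3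
        · exact Or.inr h3
      · exact Or.inr (h2.trans h1)
  · rintro (h | h)
    · induction h with
      | refl => exact Relation.EqvGen.refl a
      | tail _ h2 ih => exact Relation.EqvGen.trans _ _ _ ih (Relation.EqvGen.rel _ _ h2)
    · have : Relation.EqvGen (nxtRel w) b a := by
        induction h with
        | refl => exact Relation.EqvGen.refl b
        | tail _ h2 ih => exact Relation.EqvGen.trans _ _ _ ih (Relation.EqvGen.rel _ _ h2)
      exact Relation.EqvGen.symm _ _ this

def nxtStd (w : Fin n → Letter) : Setoid (Fin n) :=
  ⟨Relation.EqvGen (nxtRel w), Relation.EqvGen.is_equivalence _⟩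

noncomputable def nxtDec (w : Fin n → Letter) : DecidableRel (nxtStd w).r :=
  fun _ _ => Classical.dec _

noncomputable def partOf (w : Fin n → Letter) : Finpartition (univ : Finset (Fin n)) :=
  @Finpartition.ofSetoid (Fin n) _ _ (nxtStd w) (nxtDec w)

lemma mem_partOf {a b : Fin n} : b ∈ (partOf w).part a ↔ Relation.EqvGen (nxtRel w) a b := by
  letI := nxtDec w
  exact Finpartition.mem_part_ofSetoid_iff_rel (s := nxtStd w)

lemma arc_partOf (hv : stFrom start w n = some start) {i j : Fin n} :
    IsArc (partOf w) i j ↔ nxtRel w i j := by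
  constructor
  · rintro ⟨hij, B, hB, hiB, hjB, hmin⟩
    have hBpart : (partOf w).part i = B := (partOf w).part_eq_of_mem hB hiB
    have hrel : Relation.EqvGen (nxtRel w) i j := mem_partOf.1 (hBpart ▸ hjB)
    rcases (eqv_iff hv).1 hrel with hrtg | hrtg
    · rcases Relation.ReflTransGen.cases_head hrtg with heq | ⟨m, hstep, hmj⟩
      · exact absurd heq (ne_of_lt hij)
      · have hmB : m ∈ B := by
          rw [← hBpart]
          exact mem_partOf.2 (Relation.EqvGen.rel _ _ hstep)
        have h1 : j ≤ m := hmin m hmB (by obtain ⟨_, _, _, hlt', _⟩ := hstep; exact hlt')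
        have h2 : m ≤ j := rtg_le hmj
        have : m = j := le_antisymm h2 h1
        exact this ▸ hstep
    · exact absurd (rtg_le hrtg) (not_le.2 hij)
  · intro h
    obtain ⟨ch, -, -, hltij, -⟩ := id h
    refine ⟨hltij, (partOf w).part i, (partOf w).part_mem.2 (mem_univ i),
      (partOf w).mem_part_self.2 (mem_univ i), mem_partOf.2 (Relation.EqvGen.rel _ _ h), ?_⟩
    intro k hk hik
    have hrel : Relation.EqvGen (nxtRel w) i k := mem_partOf.1 hk
    rcases (eqv_iff hv).1 hrel with hrtg | hrtg
    · rcases Relation.ReflTransGen.cases_head hrtg with heq | ⟨m, hstep, hmk⟩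
      · exact absurd heq (ne_of_lt hik)
      · have : m = j := nxt_func hstep h
        subst this
        exact rtg_le hmk
    · exact absurd (rtg_le hrtg) (not_le.2 hik)

noncomputable def recon (w : Fin n → Letter) : ColoredPartition n 2 :=
  ⟨partOf w, fun i _ _ => ((w i).2).getD 0⟩

lemma recon_color (hv : stFrom start w n = some start) {i j : Fin n} {c : Fin 2}
    (h : IsArc (recon w).P i j) (hc : (w i).2 = some c) :
    (recon w).color i j h = c := by
  show ((w i).2).getD 0 = c
  rw [hc]
  rfl

lemma good_recon (hv : stFrom start w n = some start) :
    ¬HasCrossing (recon w) 2 ∧ ¬HasNesting (recon w) 2 := by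
  constructor
  · rintro ⟨f, g, c, hf, hg, hfg, harcs⟩
    obtain ⟨h0, hc0⟩ := harcs 0
    obtain ⟨h1, hc1⟩ := harcs 1
    have hn0 : nxtRel w (f 0) (g 0) := (arc_partOf hv).1 h0
    have hn1 : nxtRel w (f 1) (g 1) := (arc_partOf hv).1 h1
    obtain ⟨c0, hw0, -, -, -⟩ := id hn0
    obtain ⟨c1, hw1, -, -, -⟩ := id hn1
    have e0 : c0 = c := by rw [← hc0]; exact (recon_color hv h0 hw0).symm
    have e1 : c1 = c := by rw [← hc1]; exact (recon_color hv h1 hw1).symm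
    have hff : f 0 < f 1 := hf (by decide : (0 : Fin 2) < 1)
    have hno := nxt_noov hv hn0 hw0
      (show (w (f 1)).2 = some c0 by rw [hw1, e1, e0]) hff
    exact absurd (hfg 1 0) (not_lt.2 hno)
  · rintro ⟨f, g, c, hf, hg, hfg, harcs⟩
    obtain ⟨h0, hc0⟩ := harcs 0
    obtain ⟨h1, hc1⟩ := harcs 1
    have hn0 : nxtRel w (f 0) (g 0) := (arc_partOf hv).1 h0
    have hn1 : nxtRel w (f 1) (g 1) := (arc_partOf hv).1 h1
    obtain ⟨c0, hw0, -, -, -⟩ := id hn0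
    obtain ⟨c1, hw1, -, -, -⟩ := id hn1
    have e0 : c0 = c := by rw [← hc0]; exact (recon_color hv h0 hw0).symm
    have e1 : c1 = c := by rw [← hc1]; exact (recon_color hv h1 hw1).symm
    have hff : f 0 < f 1 := hf (by decide : (0 : Fin 2) < 1)
    have hno := nxt_noov hv hn0 hw0
      (show (w (f 1)).2 = some c0 by rw [hw1, e1, e0]) hff
    exact absurd (hfg 1 0) (not_lt.2 hno)

lemma wordOf_recon (hv : stFrom start w n = some start) : wordOf (recon w) = w := by
  funext i
  rw [wordOf]
  have hopen : openO (recon w) i = (w i).2 := by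
    cases hc : (w i).2 with
    | none =>
      rw [openO, dif_neg]
      rintro ⟨j, hj⟩
      obtain ⟨c, hc1, -⟩ := (arc_partOf hv).1 hj
      rw [hc] at hc1
      exact nomatch hc1
    | some c =>
      obtain ⟨j, hj⟩ := nxt_exists hv hc
      have harc : IsArc (recon w).P i j := (arc_partOf hv).2 hj
      rw [openO_eq (recon w) harc, recon_color hv harc hc]
  have hclose : closeO (recon w) i = (w i).1 := by
    cases hc : (w i).1 with
    | none =>
      rw [closeO, dif_neg]
      rintro ⟨j, hj⟩
      obtain ⟨c, -, hc2, -⟩ := (arc_partOf hv).1 hj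
      rw [hc] at hc2
      exact nomatch hc2
    | some c =>
      obtain ⟨i₀, hi₀⟩ := close_has_open hv hc
      have harc : IsArc (recon w).P i₀ i := (arc_partOf hv).2 hi₀
      obtain ⟨c₀, hw1, hw2, -, -⟩ := hi₀
      have : c₀ = c := Option.some_injective _ (hw2.symm.trans hc)
      subst this
      rw [closeO_eq (recon w) harc, recon_color hv harc hw1]
  rw [hopen, hclose]

end Recon2


noncomputable def gq (n : ℕ) (s : St) : ℕ :=
  Nat.card {w : Fin n → Letter // stFrom s w n = some start}

lemma stFrom_succ_eq {n : ℕ} (s : St) (w : Fin (n+1) → Letter) :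
    ∀ k, k ≤ n → stFrom s w (k+1)
      = (stepFn s (w 0)).bind (fun s' => stFrom s' (fun i => w i.succ) k) := by
  intro k
  induction k with
  | zero =>
    intro _
    show dite _ _ _ = _
    rw [dif_pos (Nat.succ_pos n)]
    simp [stFrom]
  | succ k ih =>
    intro hk
    show dite _ _ _ = _
    rw [dif_pos (by omega : k + 1 < n + 1), ih (by omega)]
    rw [Option.bind_assoc]
    apply congrArg
    funext s'
    show _ = stFrom s' (fun i => w i.succ) (k+1)
    rw [stFrom, dif_pos (by omega : k < n)]
    rfl

instance {n : ℕ} (s : St) : Fintype {w : Fin n → Letter // stFrom s w n = some start} := by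
  infer_instance

lemma gq_succ (n : ℕ) (s : St) :
    gq (n+1) s = ∑ ℓ : Letter, (stepFn s ℓ).elim 0 (gq n) := by
  have e1 : {w : Fin (n+1) → Letter // stFrom s w (n+1) = some start}
      ≃ Σ ℓ : Letter, {v : Fin n → Letter //
          (stepFn s ℓ).bind (fun s' => stFrom s' v n) = some start} := by
    refine (Equiv.subtypeEquiv (Fin.consEquiv (fun _ => Letter)).symm ?_).trans
      (Equiv.subtypeProdEquivSigmaSubtype
        (fun ℓ (v : Fin n → Letter) => (stepFn s ℓ).bind (fun s' => stFrom s' v n) = some start))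
    intro w
    rw [stFrom_succ_eq s w n le_rfl]
    rfl
  rw [gq, Nat.card_congr e1, Nat.card_eq_fintype_card, Fintype.card_sigma]
  congr 1
  funext ℓ
  cases h : stepFn s ℓ with
  | none => simp [h]
  | some s' =>
    simp only [h, Option.elim, Option.bind_some, gq, Nat.card_eq_fintype_card]

lemma gq_zero (s : St) : gq 0 s = if s = start then 1 else 0 := by
  rcases eq_or_ne s start with h | h
  · subst h
    rw [if_pos rfl, gq]
    have : {w : Fin 0 → Letter // stFrom start w 0 = some start} ≃ (Fin 0 → Letter) :=
      Equiv.subtypeUnivEquiv (fun _ => rfl)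
    rw [Nat.card_congr this]
    simp [Nat.card_eq_fintype_card]
  · rw [if_neg h, gq]
    have : IsEmpty {w : Fin 0 → Letter // stFrom s w 0 = some start} := by
      refine ⟨fun ⟨w, hw⟩ => ?_⟩
      exact h (by simpa [stFrom] using hw)
    simp [Nat.card_eq_fintype_card]

lemma stepA (n : ℕ) : gq (n+1) (false, false)
    = gq n (false, false) + gq n (true, false) + gq n (false, true) := by
  rw [gq_succ]
  rw [Fintype.sum_prod_type]
  simp only [Fintype.sum_option, Fin.sum_univ_two]
  simp [stepFn, cget, cset]
  ring

lemma stepB (n : ℕ) : gq (n+1) (true, false)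
    = gq n (false, false) + 2 * gq n (true, false) + gq n (false, true) + gq n (true, true) := by
  rw [gq_succ, Fintype.sum_prod_type]
  simp only [Fintype.sum_option, Fin.sum_univ_two]
  simp [stepFn, cget, cset]
  ring

lemma stepC (n : ℕ) : gq (n+1) (false, true)
    = gq n (false, false) + gq n (true, false) + 2 * gq n (false, true) + gq n (true, true) := by
  rw [gq_succ, Fintype.sum_prod_type]
  simp only [Fintype.sum_option, Fin.sum_univ_two]
  simp [stepFn, cget, cset]
  ring

lemma stepD (n : ℕ) : gq (n+1) (true, true)
    = gq n (true, false) + gq n (false, true) + 3 * gq n (true, true) := by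
  rw [gq_succ, Fintype.sum_prod_type]
  simp only [Fintype.sum_option, Fin.sum_univ_two]
  simp [stepFn, cget, cset]
  ring

lemma gq_rec (n : ℕ) :
    gq (n+3) start + 11 * gq (n+1) start = 7 * gq (n+2) start + gq n start := by
  have a1 := stepA n; have a2 := stepA (n+1); have a3 := stepA (n+2)
  have b1 := stepB n; have b2 := stepB (n+1)
  have c1 := stepC n; have c2 := stepC (n+1)
  have d1 := stepD n
  show gq (n+3) (false, false) + 11 * gq (n+1) (false, false)
    = 7 * gq (n+2) (false, false) + gq n (false, false)
  simp only [show n+1+1 = n+2 from rfl, show n+2+1 = n+3 from rfl] at *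
  omega

lemma gq0 : gq 0 start = 1 := by rw [gq_zero]; rfl
lemma gq1 : gq 1 start = 1 := by
  show gq (0+1) (false, false) = 1
  rw [stepA 0]
  simp [gq_zero, start]
lemma gq2 : gq 2 start = 3 := by
  show gq (1+1) (false, false) = 3
  rw [stepA 1, show (1:ℕ) = 0 + 1 from rfl, stepA 0, stepB 0, stepC 0]
  simp [gq_zero, start]


lemma ncn_eq_gq (n : ℕ) : ncn222 n = gq n start := by
  rw [ncn222, gq]
  apply Nat.card_congr
  refine Equiv.ofBijective
    (fun Λ : {Λ : ColoredPartition n 2 // ¬HasCrossing Λ 2 ∧ ¬HasNesting Λ 2} =>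
      (⟨wordOf Λ.1, valid_wordOf Λ.2⟩ :
        {w : Fin n → Letter // stFrom start w n = some start})) ⟨?_, ?_⟩
  · rintro ⟨Λ, hΛ⟩ ⟨Λ', hΛ'⟩ h
    exact Subtype.ext (wordOf_inj hΛ hΛ' (congrArg Subtype.val h))
  · rintro ⟨w, hw⟩
    exact ⟨⟨recon w, good_recon hw⟩, Subtype.ext (wordOf_recon hw)⟩

theorem gfThm (a : ℕ → ℕ) (h0 : a 0 = 1) (h1 : a 1 = 1) (h2 : a 2 = 3)
    (hrec : ∀ n, a (n+3) + 11 * a (n+1) = 7 * a (n+2) + a n) :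
    (PowerSeries.mk fun n => (a n : ℚ)) *
        (1 - 7 * PowerSeries.X + 11 * PowerSeries.X ^ 2 - PowerSeries.X ^ 3) =
      1 - 6 * PowerSeries.X + 7 * PowerSeries.X ^ 2 := by
  set f := PowerSeries.mk fun n => (a n : ℚ) with hf
  have c7 : (PowerSeries.C (R := ℚ)) 7 = (7 : PowerSeries ℚ) := map_ofNat _ 7
  have c11 : (PowerSeries.C (R := ℚ)) 11 = (11 : PowerSeries ℚ) := map_ofNat _ 11
  have c6 : (PowerSeries.C (R := ℚ)) 6 = (6 : PowerSeries ℚ) := map_ofNat _ 6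
  have expand : f * (1 - 7 * PowerSeries.X + 11 * PowerSeries.X ^ 2 - PowerSeries.X ^ 3)
      = f - ((PowerSeries.C (R := ℚ)) 7) * (f * PowerSeries.X ^ 1)
        + ((PowerSeries.C (R := ℚ)) 11) * (f * PowerSeries.X ^ 2)
        - (f * PowerSeries.X ^ 3) := by
    rw [c7, c11]; ring
  have expand2 : (1 - 6 * PowerSeries.X + 7 * PowerSeries.X ^ 2 : PowerSeries ℚ)
      = 1 - ((PowerSeries.C (R := ℚ)) 6) * PowerSeries.X ^ 1 + ((PowerSeries.C (R := ℚ)) 7) * PowerSeries.X ^ 2 := by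
    rw [c7, c6]; ring
  rw [expand, expand2]
  ext n
  simp only [map_sub, map_add, PowerSeries.coeff_C_mul, PowerSeries.coeff_mul_X_pow',
    PowerSeries.coeff_mk, PowerSeries.coeff_one, PowerSeries.coeff_X_pow, PowerSeries.coeff_C]
  match n with
  | 0 => norm_num [hf, PowerSeries.constantCoeff_mk, h0]
  | 1 => norm_num [hf, PowerSeries.constantCoeff_mk, PowerSeries.coeff_mk, h0, h1]
  | 2 => norm_num [hf, PowerSeries.constantCoeff_mk, PowerSeries.coeff_mk, h0, h1, h2]
  | (m+3) =>
    have := hrec m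
    have : (a (m+3) : ℚ) + 11 * a (m+1) = 7 * a (m+2) + a m := by exact_mod_cast this
    norm_num [hf, PowerSeries.coeff_mk]
    push_cast
    linarith

end NCN

/-- `Σ NCN_{2,2}(n,2) xⁿ = (1 − 6x + 7x²)/(1 − 7x + 11x² − x³)`. -/
theorem stmt12 :
    (PowerSeries.mk fun n => (ncn222 n : ℚ)) *
        (1 - 7 * PowerSeries.X + 11 * PowerSeries.X ^ 2 - PowerSeries.X ^ 3) =
      1 - 6 * PowerSeries.X + 7 * PowerSeries.X ^ 2 := by
  have e : (PowerSeries.mk fun n => (ncn222 n : ℚ))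
      = PowerSeries.mk fun n => ((fun m => NCN.gq m NCN.start) n : ℚ) := by
    exact congrArg PowerSeries.mk (funext fun m => by rw [NCN.ncn_eq_gq])
  rw [e]
  exact NCN.gfThm (fun m => NCN.gq m NCN.start) NCN.gq0 NCN.gq1 NCN.gq2 NCN.gq_rec
end

section
/- For all positive integers j, k, n, r: NCN_{j,k}(n+1, r) = Σ_{i=0}^{n} C(n, i) · ENCN_{j,k}(i, r), where NCN_{j,k}(m, r) is the number of r-colored j-noncrossing k-nonnesting partitions of [m] and ENCN_{j,k}(i, r) is the number of r-colored enhanced partitions of [i] with enhanced crossing number < j and enhanced nesting number < k. -/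
open Finset

/-- The number of `r`-colored `j`-noncrossing `k`-nonnesting partitions of `[m]`. -/
noncomputable def NCNcount (m r j k : ℕ) : ℕ :=
  Nat.card {Λ : ColoredPartition m r // ¬HasCrossing Λ j ∧ ¬HasNesting Λ k}

/-- The number of `r`-colored enhanced partitions of `[m]` with enhanced crossing
number `< j` and enhanced nesting number `< k`. -/
noncomputable def ENCNcount (m r j k : ℕ) : ℕ :=
  Nat.card {Λ : EnhColoredPartition m r // ¬HasEnhCrossing Λ j ∧ ¬HasEnhNesting Λ k}


namespace Stmt15Aux

open Finset

variable {m r : ℕ}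

theorem isArc_out_unique {P : Finpartition (Finset.univ : Finset (Fin m))} {a b b' : Fin m}
    (h : IsArc P a b) (h' : IsArc P a b') : b = b' := by
  obtain ⟨hab, B, hB, haB, hbB, hmin⟩ := h
  obtain ⟨hab', B', hB', haB', hbB', hmin'⟩ := h'
  have hBB' : B = B' := P.eq_of_mem_parts hB hB' haB haB'
  subst hBB'
  exact le_antisymm (hmin b' hbB' hab') (hmin' b hbB hab)

theorem isArc_in_unique {P : Finpartition (Finset.univ : Finset (Fin m))} {a a' b : Fin m}
    (h : IsArc P a b) (h' : IsArc P a' b) : a = a' := by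
  obtain ⟨hab, B, hB, haB, hbB, hmin⟩ := h
  obtain ⟨hab', B', hB', haB', hbB', hmin'⟩ := h'
  have hBB' : B = B' := P.eq_of_mem_parts hB hB' hbB hbB'
  subst hBB'
  by_contra hne
  rcases lt_trichotomy a a' with h1 | h1 | h1
  · exact absurd (hmin a' haB' h1) (not_le.mpr hab')
  · exact hne h1
  · exact absurd (hmin' a haB h1) (not_le.mpr hab)

theorem exists_isArc_of_lt {P : Finpartition (Finset.univ : Finset (Fin m))}
    {B : Finset (Fin m)} (hB : B ∈ P.parts) {a c : Fin m}
    (haB : a ∈ B) (hcB : c ∈ B) (hac : a < c) : ∃ b, IsArc P a b ∧ b ≤ c := by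
  classical
  have hcT : c ∈ B.filter (fun k => a < k) := by simp [hcB, hac]
  have hne : (B.filter (fun k => a < k)).Nonempty := ⟨c, hcT⟩
  have hmem := Finset.mem_filter.mp (Finset.min'_mem _ hne)
  refine ⟨Finset.min' _ hne, ⟨hmem.2, B, hB, haB, hmem.1, ?_⟩, Finset.min'_le _ c hcT⟩
  intro x hxB hax
  exact Finset.min'_le _ x (by simp [hxB, hax])

theorem exists_isArc_of_gt {P : Finpartition (Finset.univ : Finset (Fin m))}
    {B : Finset (Fin m)} (hB : B ∈ P.parts) {a c : Fin m}
    (haB : a ∈ B) (hcB : c ∈ B) (hca : c < a) : ∃ b, IsArc P b a := by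
  classical
  have hcT : c ∈ B.filter (fun k => k < a) := by simp [hcB, hca]
  have hne : (B.filter (fun k => k < a)).Nonempty := ⟨c, hcT⟩
  have hmem := Finset.mem_filter.mp (Finset.max'_mem _ hne)
  refine ⟨Finset.max' _ hne, hmem.2, B, hB, hmem.1, haB, ?_⟩
  intro x hxB hx
  by_contra hax
  push_neg at hax
  have : x ∈ B.filter (fun k => k < a) := by simp [hxB, hax]
  exact absurd (Finset.le_max' _ x this) (not_le.mpr hx)

theorem blockMax_iff {P : Finpartition (Finset.univ : Finset (Fin m))} {a : Fin m} :
    a ∈ blockMax P ↔ ∀ b, ¬ IsArc P a b := by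
  constructor
  · rintro ⟨B, hB, haB, hmax⟩ b ⟨hab, B', hB', haB', hbB', -⟩
    have : B = B' := P.eq_of_mem_parts hB hB' haB haB'
    subst this
    exact absurd (hmax b hbB') (not_le.mpr hab)
  · intro h
    refine ⟨P.part a, P.part_mem.mpr (mem_univ a), P.mem_part (mem_univ a), ?_⟩
    intro x hx
    by_contra hax
    push_neg at hax
    obtain ⟨b, hb, -⟩ := exists_isArc_of_lt (P.part_mem.mpr (mem_univ a))
      (P.mem_part (mem_univ a)) hx hax
    exact h b hb

theorem blockMin_iff {P : Finpartition (Finset.univ : Finset (Fin m))} {a : Fin m} :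
    a ∈ blockMin P ↔ ∀ b, ¬ IsArc P b a := by
  constructor
  · rintro ⟨B, hB, haB, hmin⟩ b ⟨hba, B', hB', hbB', haB', -⟩
    have : B = B' := P.eq_of_mem_parts hB hB' haB haB'
    subst this
    exact absurd (hmin b hbB') (not_le.mpr hba)
  · intro h
    refine ⟨P.part a, P.part_mem.mpr (mem_univ a), P.mem_part (mem_univ a), ?_⟩
    intro x hx
    by_contra hax
    push_neg at hax
    obtain ⟨b, hb⟩ := exists_isArc_of_gt (P.part_mem.mpr (mem_univ a))
      (P.mem_part (mem_univ a)) hx hax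
    exact h b hb

theorem enhIsArc_iff {P : Finpartition (Finset.univ : Finset (Fin m))} {a b : Fin m} :
    EnhIsArc P a b ↔ IsArc P a b ∨
      (a = b ∧ (∀ x, ¬ IsArc P x a) ∧ (∀ x, ¬ IsArc P a x)) := by
  unfold EnhIsArc
  rw [blockMin_iff, blockMax_iff]

theorem exists_enhArc (P : Finpartition (Finset.univ : Finset (Fin m))) (x : Fin m) :
    (∃ y, EnhIsArc P x y) ∨ (∃ y, EnhIsArc P y x) := by
  by_cases h1 : ∃ y, IsArc P x y
  · exact Or.inl ⟨h1.choose, Or.inl h1.choose_spec⟩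
  by_cases h2 : ∃ y, IsArc P y x
  · exact Or.inr ⟨h2.choose, Or.inl h2.choose_spec⟩
  push_neg at h1 h2
  exact Or.inl ⟨x, Or.inr ⟨rfl, blockMin_iff.mpr h2, blockMax_iff.mpr h1⟩⟩

theorem enhIsArc_le {P : Finpartition (Finset.univ : Finset (Fin m))} {a b : Fin m}
    (h : EnhIsArc P a b) : a ≤ b := by
  rcases h with h | ⟨rfl, -, -⟩
  · exact h.1.le
  · exact le_rfl

theorem enhIsArc_in_unique {P : Finpartition (Finset.univ : Finset (Fin m))} {a a' b : Fin m}
    (h : EnhIsArc P a b) (h' : EnhIsArc P a' b) : a = a' := by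
  rcases h with h | ⟨rfl, hmin, hmax⟩
  · rcases h' with h' | ⟨rfl, hmin', hmax'⟩
    · exact isArc_in_unique h h'
    · exact absurd h (blockMin_iff.mp hmin' a)
  · rcases h' with h' | ⟨h'', -, -⟩
    · exact absurd h' (blockMin_iff.mp hmin a')
    · exact h''.symm

theorem enhIsArc_out_unique {P : Finpartition (Finset.univ : Finset (Fin m))} {a b b' : Fin m}
    (h : EnhIsArc P a b) (h' : EnhIsArc P a b') : b = b' := by
  rcases h with h | ⟨rfl, hmin, hmax⟩
  · rcases h' with h' | ⟨heq, hmin', hmax'⟩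
    · exact isArc_out_unique h h'
    · exact absurd (heq ▸ h) (blockMax_iff.mp hmax' b)
  · rcases h' with h' | ⟨h'', -, -⟩
    · exact absurd h' (blockMax_iff.mp hmax b')
    · exact h''

/-! ### Partition is determined by its arcs -/

def sameBlock (P : Finpartition (Finset.univ : Finset (Fin m))) (a b : Fin m) : Prop :=
  ∃ B ∈ P.parts, a ∈ B ∧ b ∈ B

theorem sameBlock_self (P : Finpartition (Finset.univ : Finset (Fin m))) (a : Fin m) :
    sameBlock P a a :=
  ⟨P.part a, P.part_mem.mpr (mem_univ a), P.mem_part (mem_univ a), P.mem_part (mem_univ a)⟩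

theorem sameBlock_symm {P : Finpartition (Finset.univ : Finset (Fin m))} {a b : Fin m}
    (h : sameBlock P a b) : sameBlock P b a := by
  obtain ⟨B, hB, h1, h2⟩ := h
  exact ⟨B, hB, h2, h1⟩

theorem sameBlock_trans {P : Finpartition (Finset.univ : Finset (Fin m))} {a b c : Fin m}
    (h : sameBlock P a b) (h' : sameBlock P b c) : sameBlock P a c := by
  obtain ⟨B, hB, h1, h2⟩ := h
  obtain ⟨B', hB', h1', h2'⟩ := h'
  have : B = B' := P.eq_of_mem_parts hB hB' h2 h1'
  subst this
  exact ⟨B, hB, h1, h2'⟩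

theorem sameBlock_of_isArc {P : Finpartition (Finset.univ : Finset (Fin m))} {a b : Fin m}
    (h : IsArc P a b) : sameBlock P a b := by
  obtain ⟨-, B, hB, h1, h2, -⟩ := h
  exact ⟨B, hB, h1, h2⟩

theorem reflTransGen_isArc_of_sameBlock {P : Finpartition (Finset.univ : Finset (Fin m))} :
    ∀ (d : ℕ) (a b : Fin m), b.1 - a.1 ≤ d → sameBlock P a b → a ≤ b →
      Relation.ReflTransGen (IsArc P) a b := by
  intro d
  induction d with
  | zero =>
    intro a b hd hsb hab
    have hab' : a.1 ≤ b.1 := Fin.le_def.mp hab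
    have : a = b := Fin.ext (by omega)
    subst this; exact .refl
  | succ d ih =>
    intro a b hd hsb hab
    rcases eq_or_lt_of_le hab with rfl | h
    · exact .refl
    obtain ⟨B, hB, haB, hbB⟩ := hsb
    obtain ⟨x, harc, hxb⟩ := exists_isArc_of_lt hB haB hbB h
    have hax : a.1 < x.1 := Fin.lt_def.mp harc.1
    have hxb' : x.1 ≤ b.1 := Fin.le_def.mp hxb
    exact Relation.ReflTransGen.head harc (ih x b (by omega)
      (sameBlock_trans (sameBlock_symm (sameBlock_of_isArc harc)) ⟨B, hB, haB, hbB⟩) hxb)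

theorem sameBlock_iff_reflTransGen {P : Finpartition (Finset.univ : Finset (Fin m))}
    {a b : Fin m} : sameBlock P a b ↔
      Relation.ReflTransGen (IsArc P) a b ∨ Relation.ReflTransGen (IsArc P) b a := by
  constructor
  · intro h
    rcases le_total a b with hab | hba
    · exact Or.inl (reflTransGen_isArc_of_sameBlock b.1 a b (by omega) h hab)
    · exact Or.inr (reflTransGen_isArc_of_sameBlock a.1 b a (by omega) (sameBlock_symm h) hba)
  · have hrt : ∀ {x y : Fin m}, Relation.ReflTransGen (IsArc P) x y → sameBlock P x y := by
      intro x y h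
      induction h with
      | refl => exact sameBlock_self P _
      | tail h1 h2 ih => exact sameBlock_trans ih (sameBlock_of_isArc h2)
    rintro (h | h)
    · exact hrt h
    · exact sameBlock_symm (hrt h)

theorem sameBlock_iff_mem_part {P : Finpartition (Finset.univ : Finset (Fin m))}
    {a b : Fin m} : sameBlock P a b ↔ b ∈ P.part a := by
  constructor
  · rintro ⟨B, hB, haB, hbB⟩
    rwa [P.part_eq_of_mem hB haB]
  · intro h
    exact ⟨P.part a, P.part_mem.mpr (mem_univ a), P.mem_part (mem_univ a), h⟩

theorem finpartition_eq_of_isArc_iff {P P' : Finpartition (Finset.univ : Finset (Fin m))}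
    (h : ∀ a b, IsArc P a b ↔ IsArc P' a b) : P = P' := by
  have harc : IsArc P = IsArc P' := by
    funext a b; exact propext (h a b)
  have hsb : ∀ a b, sameBlock P a b ↔ sameBlock P' a b := by
    intro a b
    rw [sameBlock_iff_reflTransGen, sameBlock_iff_reflTransGen, harc]
  have key : ∀ (Q Q' : Finpartition (Finset.univ : Finset (Fin m))),
      (∀ a b, sameBlock Q a b ↔ sameBlock Q' a b) → ∀ B ∈ Q.parts, B ∈ Q'.parts := by
    intro Q Q' hQ B hB
    obtain ⟨a, haB⟩ := Q.nonempty_of_mem_parts hB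
    have : B = Q'.part a := by
      ext x
      rw [← sameBlock_iff_mem_part, ← hQ]
      constructor
      · intro hx; exact ⟨B, hB, haB, hx⟩
      · rintro ⟨B', hB', haB', hxB'⟩
        rwa [Q.eq_of_mem_parts hB hB' haB haB']
    rw [this]
    exact Q'.part_mem.mpr (mem_univ a)
  ext B
  exact ⟨fun hB => key P P' hsb B hB, fun hB => key P' P (fun a b => (hsb a b).symm) B hB⟩

/-! ### Building a partition from arc data -/

section Build

variable {R : Fin m → Fin m → Prop}

theorem reach_le (hlt : ∀ a b, R a b → a < b) {a b : Fin m}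
    (h : Relation.ReflTransGen R a b) : a ≤ b := by
  induction h with
  | refl => exact le_rfl
  | tail h1 h2 ih => exact ih.trans (hlt _ _ h2).le

theorem reach_total_fwd (hfun : ∀ a b b', R a b → R a b' → b = b') {a b c : Fin m}
    (hab : Relation.ReflTransGen R a b) :
    Relation.ReflTransGen R a c →
      Relation.ReflTransGen R b c ∨ Relation.ReflTransGen R c b := by
  induction hab using Relation.ReflTransGen.head_induction_on with
  | refl => exact fun h => Or.inl h
  | head hstep hrest ih =>
    intro hac
    rcases Relation.ReflTransGen.cases_head hac with rfl | ⟨a'', h1, h2⟩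
    · exact Or.inr (hrest.head hstep)
    · exact ih (by rwa [hfun _ _ _ h1 hstep] at h2)

theorem reach_total_bwd (hlt : ∀ a b, R a b → a < b)
    (hinj : ∀ a a' b, R a b → R a' b → a = a') :
    ∀ (N : ℕ) (c : Fin m), c.1 < N → ∀ a b, Relation.ReflTransGen R a c →
      Relation.ReflTransGen R b c →
      Relation.ReflTransGen R a b ∨ Relation.ReflTransGen R b a := by
  intro N
  induction N with
  | zero => intro c hc; omega
  | succ N ih =>
    intro c hc a b hac hbc
    rcases Relation.ReflTransGen.cases_tail hac with rfl | ⟨a', ha', hstepa⟩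
    · exact Or.inr hbc
    rcases Relation.ReflTransGen.cases_tail hbc with rfl | ⟨b', hb', hstepb⟩
    · exact Or.inl hac
    have : a' = b' := hinj _ _ _ hstepa hstepb
    subst this
    have ha'N : a'.1 < N := by
      have := Fin.lt_def.mp (hlt _ _ hstepa); omega
    exact ih a' ha'N a b ha' hb'

theorem reach_total_bwd' (hlt : ∀ a b, R a b → a < b)
    (hinj : ∀ a a' b, R a b → R a' b → a = a') {a b c : Fin m}
    (hac : Relation.ReflTransGen R a c) (hbc : Relation.ReflTransGen R b c) :
    Relation.ReflTransGen R a b ∨ Relation.ReflTransGen R b a :=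
  reach_total_bwd hlt hinj (c.1 + 1) c (by omega) a b hac hbc

/-- The setoid generated by a functional arc relation: two points are equivalent
iff they reach a common point. -/
def buildSetoid (R : Fin m → Fin m → Prop)
    (hfun : ∀ a b b', R a b → R a b' → b = b') : Setoid (Fin m) where
  r a b := ∃ c, Relation.ReflTransGen R a c ∧ Relation.ReflTransGen R b c
  iseqv := by
    constructor
    · exact fun a => ⟨a, .refl, .refl⟩
    · rintro a b ⟨c, h1, h2⟩; exact ⟨c, h2, h1⟩
    · rintro a b c ⟨u, hau, hbu⟩ ⟨v, hbv, hcv⟩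
      rcases reach_total_fwd hfun hbu hbv with h | h
      · exact ⟨v, hau.trans h, hcv⟩
      · exact ⟨u, hau, hcv.trans h⟩

noncomputable def buildP (R : Fin m → Fin m → Prop)
    (hfun : ∀ a b b', R a b → R a b' → b = b') :
    Finpartition (Finset.univ : Finset (Fin m)) :=
  @Finpartition.ofSetoid (Fin m) _ _ (buildSetoid R hfun) (Classical.decRel _)

theorem sameBlock_buildP (hfun : ∀ a b b', R a b → R a b' → b = b') {a b : Fin m} :
    sameBlock (buildP R hfun) a b ↔
      ∃ c, Relation.ReflTransGen R a c ∧ Relation.ReflTransGen R b c := by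
  rw [sameBlock_iff_mem_part]
  unfold buildP
  letI : DecidableRel (buildSetoid R hfun).r := Classical.decRel _
  exact Finpartition.mem_part_ofSetoid_iff_rel

theorem isArc_buildP (hlt : ∀ a b, R a b → a < b)
    (hinj : ∀ a a' b, R a b → R a' b → a = a')
    (hfun : ∀ a b b', R a b → R a b' → b = b') {a b : Fin m} :
    IsArc (buildP R hfun) a b ↔ R a b := by
  constructor
  · rintro ⟨hab, B, hB, haB, hbB, hmin⟩
    have hrel : ∃ c, Relation.ReflTransGen R a c ∧ Relation.ReflTransGen R b c := by
      rw [← sameBlock_buildP hfun]; exact ⟨B, hB, haB, hbB⟩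
    obtain ⟨u, hau, hbu⟩ := hrel
    rcases reach_total_bwd' hlt hinj hau hbu with hr | hr
    · rcases Relation.ReflTransGen.cases_head hr with rfl | ⟨x, hax, hxb⟩
      · exact absurd rfl hab.ne
      · have hxB : x ∈ B := by
          have : sameBlock (buildP R hfun) a x :=
            (sameBlock_buildP hfun).mpr ⟨b, hr, hxb⟩
          obtain ⟨B', hB', haB', hxB'⟩ := this
          rwa [(buildP R hfun).eq_of_mem_parts hB' hB haB' haB] at hxB'
        have h1 : b ≤ x := hmin x hxB (hlt _ _ hax)
        have h2 : x ≤ b := reach_le hlt hxb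
        rwa [le_antisymm h2 h1] at hax
    · exact absurd (reach_le hlt hr) (not_le.mpr hab)
  · intro h
    refine ⟨hlt _ _ h, (buildP R hfun).part a, (buildP R hfun).part_mem.mpr (mem_univ a),
      (buildP R hfun).mem_part (mem_univ a), ?_, ?_⟩
    · rw [← sameBlock_iff_mem_part]
      exact (sameBlock_buildP hfun).mpr ⟨b, Relation.ReflTransGen.single h, .refl⟩
    · intro x hx hax
      have hrel := (sameBlock_buildP hfun).mp (sameBlock_iff_mem_part.mpr hx)
      obtain ⟨u, hau, hxu⟩ := hrel
      rcases reach_total_bwd' hlt hinj hau hxu with hr | hr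
      · rcases Relation.ReflTransGen.cases_head hr with rfl | ⟨y, hay, hyx⟩
        · exact absurd rfl hax.ne
        · have := reach_le hlt hyx
          rwa [← hfun _ _ _ h hay] at this
      · exact absurd (reach_le hlt hr) (not_le.mpr hax)

end Build

/-! ### Extensionality and finiteness -/

theorem CP_ext {Λ₁ Λ₂ : ColoredPartition m r} (hP : Λ₁.P = Λ₂.P)
    (hc : ∀ a b (h₁ : IsArc Λ₁.P a b) (h₂ : IsArc Λ₂.P a b),
      Λ₁.color a b h₁ = Λ₂.color a b h₂) : Λ₁ = Λ₂ := by
  obtain ⟨P₁, c₁⟩ := Λ₁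
  obtain ⟨P₂, c₂⟩ := Λ₂
  dsimp at hP hc
  subst hP
  have : c₁ = c₂ := by
    funext a b h
    exact hc a b h h
  rw [this]

theorem ECP_ext {Λ₁ Λ₂ : EnhColoredPartition m r} (hP : Λ₁.P = Λ₂.P)
    (hc : ∀ a b (h₁ : EnhIsArc Λ₁.P a b) (h₂ : EnhIsArc Λ₂.P a b),
      Λ₁.color a b h₁ = Λ₂.color a b h₂) : Λ₁ = Λ₂ := by
  obtain ⟨P₁, c₁⟩ := Λ₁
  obtain ⟨P₂, c₂⟩ := Λ₂
  dsimp at hP hc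
  subst hP
  have : c₁ = c₂ := by
    funext a b h
    exact hc a b h h
  rw [this]

theorem isArc_iff_enhIsArc {P : Finpartition (Finset.univ : Finset (Fin m))} {a b : Fin m} :
    IsArc P a b ↔ EnhIsArc P a b ∧ a ≠ b := by
  constructor
  · intro h
    exact ⟨Or.inl h, h.1.ne⟩
  · rintro ⟨h | ⟨rfl, -, -⟩, hne⟩
    · exact h
    · exact absurd rfl hne

instance : Finite (ColoredPartition m r) := by
  classical
  exact Finite.of_injective
    (fun Λ => ((Λ.P, fun a b =>
        if h : IsArc Λ.P a b then some (Λ.color a b h) else none) :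
      Finpartition (Finset.univ : Finset (Fin m)) × (Fin m → Fin m → Option (Fin r))))
    (by
      intro Λ₁ Λ₂ h
      rw [Prod.mk.injEq] at h
      obtain ⟨h1, h2⟩ := h
      refine CP_ext h1 ?_
      intro a b ha hb
      have h3 := congrFun (congrFun h2 a) b
      rw [dif_pos ha, dif_pos hb] at h3
      exact Option.some.inj h3)

instance : Finite (EnhColoredPartition m r) := by
  classical
  exact Finite.of_injective
    (fun Λ => ((Λ.P, fun a b =>
        if h : EnhIsArc Λ.P a b then some (Λ.color a b h) else none) :
      Finpartition (Finset.univ : Finset (Fin m)) × (Fin m → Fin m → Option (Fin r))))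
    (by
      intro Λ₁ Λ₂ h
      rw [Prod.mk.injEq] at h
      obtain ⟨h1, h2⟩ := h
      refine ECP_ext h1 ?_
      intro a b ha hb
      have h3 := congrFun (congrFun h2 a) b
      rw [dif_pos ha, dif_pos hb] at h3
      exact Option.some.inj h3)

theorem color_congr {Λ : ColoredPartition m r} {a b a' b' : Fin m} (ha : a = a')
    (hb : b = b') (h : IsArc Λ.P a b) (h' : IsArc Λ.P a' b') :
    Λ.color a b h = Λ.color a' b' h' := by
  subst ha; subst hb; rfl

theorem ecolor_congr {Λ : EnhColoredPartition m r} {a b a' b' : Fin m} (ha : a = a')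
    (hb : b = b') (h : EnhIsArc Λ.P a b) (h' : EnhIsArc Λ.P a' b') :
    Λ.color a b h = Λ.color a' b' h' := by
  subst ha; subst hb; rfl

/-! ### Order embedding of a finset -/

section Emb

variable {n : ℕ}

noncomputable def emb (V : Finset (Fin n)) (x : Fin V.card) : Fin n :=
  (V.orderIsoOfFin rfl x : Fin n)

theorem emb_mem (V : Finset (Fin n)) (x : Fin V.card) : emb V x ∈ V :=
  (V.orderIsoOfFin rfl x).2

theorem emb_lt_emb_iff {V : Finset (Fin n)} {x y : Fin V.card} :
    emb V x < emb V y ↔ x < y := by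
  unfold emb
  rw [Subtype.coe_lt_coe]
  exact (V.orderIsoOfFin rfl).lt_iff_lt

theorem emb_le_emb_iff {V : Finset (Fin n)} {x y : Fin V.card} :
    emb V x ≤ emb V y ↔ x ≤ y := by
  unfold emb
  rw [Subtype.coe_le_coe]
  exact (V.orderIsoOfFin rfl).le_iff_le

theorem emb_inj {V : Finset (Fin n)} {x y : Fin V.card} (h : emb V x = emb V y) : x = y := by
  by_contra hne
  rcases lt_or_gt_of_ne hne with h1 | h1
  · exact absurd h (ne_of_lt (emb_lt_emb_iff.mpr h1))
  · exact absurd h.symm (ne_of_lt (emb_lt_emb_iff.mpr h1))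

theorem emb_surj {V : Finset (Fin n)} {v : Fin n} (h : v ∈ V) : ∃ x, emb V x = v :=
  ⟨(V.orderIsoOfFin rfl).symm ⟨v, h⟩, by
    unfold emb
    rw [OrderIso.apply_symm_apply]⟩

theorem emb_congr {V₁ V₂ : Finset (Fin n)} (h : V₁ = V₂) {x : Fin V₁.card}
    {y : Fin V₂.card} (hxy : (x : ℕ) = y) : emb V₁ x = emb V₂ y := by
  subst h
  have : x = y := Fin.ext hxy
  rw [this]

end Emb

/-! ### The forward map -/

section Main

variable {n r : ℕ}

noncomputable def Vset (Λ : ColoredPartition (n + 1) r) : Finset (Fin n) :=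
  @Finset.filter _ (fun v => (∃ b, IsArc Λ.P v.castSucc b) ∨ ∃ a, IsArc Λ.P a v.succ)
    (Classical.decPred _) Finset.univ

theorem mem_Vset {Λ : ColoredPartition (n + 1) r} {v : Fin n} :
    v ∈ Vset Λ ↔ (∃ b, IsArc Λ.P v.castSucc b) ∨ ∃ a, IsArc Λ.P a v.succ := by
  simp only [Vset, Finset.mem_filter, Finset.mem_univ, true_and]

abbrev Rfwd (Λ : ColoredPartition (n + 1) r) (x y : Fin (Vset Λ).card) : Prop :=
  IsArc Λ.P (emb (Vset Λ) x).castSucc (emb (Vset Λ) y).succ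

theorem Rfwd_le {Λ : ColoredPartition (n + 1) r} {x y : Fin (Vset Λ).card}
    (h : Rfwd Λ x y) : x ≤ y :=
  emb_le_emb_iff.mp (Fin.castSucc_lt_succ_iff.mp h.1)

theorem RfwdS_lt (Λ : ColoredPartition (n + 1) r) :
    ∀ x y, (Rfwd Λ x y ∧ x ≠ y) → x < y := by
  rintro x y ⟨h, hne⟩
  exact lt_of_le_of_ne (Rfwd_le h) hne

theorem RfwdS_inj (Λ : ColoredPartition (n + 1) r) :
    ∀ x x' y, (Rfwd Λ x y ∧ x ≠ y) → (Rfwd Λ x' y ∧ x' ≠ y) → x = x' := by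
  rintro x x' y ⟨h, -⟩ ⟨h', -⟩
  exact emb_inj (Fin.castSucc_injective _ (isArc_in_unique h h'))

theorem RfwdS_fun (Λ : ColoredPartition (n + 1) r) :
    ∀ x y y', (Rfwd Λ x y ∧ x ≠ y) → (Rfwd Λ x y' ∧ x ≠ y') → y = y' := by
  rintro x y y' ⟨h, -⟩ ⟨h', -⟩
  exact emb_inj (Fin.succ_injective _ (isArc_out_unique h h'))

noncomputable def QP (Λ : ColoredPartition (n + 1) r) :
    Finpartition (Finset.univ : Finset (Fin (Vset Λ).card)) :=
  buildP (fun x y => Rfwd Λ x y ∧ x ≠ y) (RfwdS_fun Λ)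

theorem isArc_QP {Λ : ColoredPartition (n + 1) r} {x y : Fin (Vset Λ).card} :
    IsArc (QP Λ) x y ↔ Rfwd Λ x y ∧ x ≠ y := by
  unfold QP
  exact isArc_buildP (RfwdS_lt Λ) (RfwdS_inj Λ) (RfwdS_fun Λ)

theorem enhIsArc_QP {Λ : ColoredPartition (n + 1) r} {x y : Fin (Vset Λ).card} :
    EnhIsArc (QP Λ) x y ↔ Rfwd Λ x y := by
  constructor
  · intro h
    rcases enhIsArc_iff.mp h with h | ⟨rfl, hmin, hmax⟩
    · exact (isArc_QP.mp h).1
    · rcases mem_Vset.mp (emb_mem (Vset Λ) x) with ⟨b, hb⟩ | ⟨a, ha⟩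
      · have hb0 : b ≠ 0 := by
          intro h0
          subst h0
          exact absurd hb.1 (by simp [Fin.lt_def])
        have hbV : b.pred hb0 ∈ Vset Λ :=
          mem_Vset.mpr (Or.inr ⟨_, by rwa [Fin.succ_pred]⟩)
        obtain ⟨y0, hy0⟩ := emb_surj hbV
        have hR : Rfwd Λ x y0 := by
          show IsArc Λ.P _ _
          rw [hy0, Fin.succ_pred]
          exact hb
        have hyx : y0 = x := by
          by_contra hne
          exact (hmax y0) (isArc_QP.mpr ⟨hR, fun he => hne he.symm⟩)
        rwa [hyx] at hR
      · have ha' : (a : ℕ) < n := by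
          have h1 : a < (emb (Vset Λ) x).succ := ha.1
          have h2 := Fin.lt_def.mp h1
          have h3 : ((emb (Vset Λ) x) : ℕ) < n := (emb (Vset Λ) x).2
          simp only [Fin.val_succ] at h2
          omega
        have hcast : (⟨(a : ℕ), ha'⟩ : Fin n).castSucc = a := by
          apply Fin.ext
          simp
        have haV : (⟨(a : ℕ), ha'⟩ : Fin n) ∈ Vset Λ :=
          mem_Vset.mpr (Or.inl ⟨(emb (Vset Λ) x).succ, by rwa [hcast]⟩)
        obtain ⟨x0, hx0⟩ := emb_surj haV
        have hR : Rfwd Λ x0 x := by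
          show IsArc Λ.P _ _
          rw [hx0, hcast]
          exact ha
        have hxx : x0 = x := by
          by_contra hne
          exact (hmin x0) (isArc_QP.mpr ⟨hR, hne⟩)
        rwa [hxx] at hR
  · intro h
    by_cases hxy : x = y
    · subst hxy
      refine enhIsArc_iff.mpr (Or.inr ⟨rfl, ?_, ?_⟩)
      · intro z hz
        obtain ⟨hR, hne⟩ := isArc_QP.mp hz
        exact hne (emb_inj (Fin.castSucc_injective _ (isArc_in_unique hR h)))
      · intro z hz
        obtain ⟨hR, hne⟩ := isArc_QP.mp hz
        exact hne (emb_inj (Fin.succ_injective _ (isArc_out_unique h hR)))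
    · exact Or.inl (isArc_QP.mpr ⟨h, hxy⟩)

noncomputable def fwd (Λ : ColoredPartition (n + 1) r) :
    Σ V : Finset (Fin n), EnhColoredPartition V.card r :=
  ⟨Vset Λ, ⟨QP Λ, fun x y h => Λ.color _ _ (enhIsArc_QP.mp h)⟩⟩

/-! ### The backward map -/

def Rbwd (V : Finset (Fin n)) (Γ : EnhColoredPartition V.card r) (a b : Fin (n + 1)) : Prop :=
  ∃ x y, a = (emb V x).castSucc ∧ b = (emb V y).succ ∧ EnhIsArc Γ.P x y

theorem Rbwd_lt (V : Finset (Fin n)) (Γ : EnhColoredPartition V.card r) :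
    ∀ a b, Rbwd V Γ a b → a < b := by
  rintro a b ⟨x, y, rfl, rfl, h⟩
  exact Fin.castSucc_lt_succ_iff.mpr (emb_le_emb_iff.mpr (enhIsArc_le h))

theorem Rbwd_inj (V : Finset (Fin n)) (Γ : EnhColoredPartition V.card r) :
    ∀ a a' b, Rbwd V Γ a b → Rbwd V Γ a' b → a = a' := by
  rintro a a' b ⟨x, y, rfl, rfl, h⟩ ⟨x', y', rfl, hb, h'⟩
  have hy : y' = y := emb_inj (Fin.succ_injective _ hb.symm)
  subst hy
  rw [enhIsArc_in_unique h h']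

theorem Rbwd_fun (V : Finset (Fin n)) (Γ : EnhColoredPartition V.card r) :
    ∀ a b b', Rbwd V Γ a b → Rbwd V Γ a b' → b = b' := by
  rintro a b b' ⟨x, y, rfl, rfl, h⟩ ⟨x', y', ha, rfl, h'⟩
  have hx : x' = x := emb_inj (Fin.castSucc_injective _ ha.symm)
  subst hx
  rw [enhIsArc_out_unique h h']

noncomputable def bwdP (V : Finset (Fin n)) (Γ : EnhColoredPartition V.card r) :
    Finpartition (Finset.univ : Finset (Fin (n + 1))) :=
  buildP (Rbwd V Γ) (Rbwd_fun V Γ)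

theorem isArc_bwdP (V : Finset (Fin n)) (Γ : EnhColoredPartition V.card r)
    {a b : Fin (n + 1)} : IsArc (bwdP V Γ) a b ↔ Rbwd V Γ a b := by
  unfold bwdP
  exact isArc_buildP (Rbwd_lt V Γ) (Rbwd_inj V Γ) (Rbwd_fun V Γ)

noncomputable def bwdColor (V : Finset (Fin n)) (Γ : EnhColoredPartition V.card r)
    (a b : Fin (n + 1)) (hR : Rbwd V Γ a b) : Fin r :=
  Γ.color hR.choose hR.choose_spec.choose hR.choose_spec.choose_spec.2.2

theorem bwdColor_eq (V : Finset (Fin n)) (Γ : EnhColoredPartition V.card r)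
    {a b : Fin (n + 1)} (hR : Rbwd V Γ a b) {x y : Fin V.card}
    (hx : a = (emb V x).castSucc) (hy : b = (emb V y).succ) (harc : EnhIsArc Γ.P x y) :
    bwdColor V Γ a b hR = Γ.color x y harc := by
  unfold bwdColor
  have e1 : hR.choose = x := by
    have h1 := hR.choose_spec.choose_spec.1
    exact (emb_inj (Fin.castSucc_injective _ (hx.symm.trans h1))).symm
  have e2 : hR.choose_spec.choose = y := by
    have h1 := hR.choose_spec.choose_spec.2.1
    exact (emb_inj (Fin.succ_injective _ (hy.symm.trans h1))).symm
  subst e1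
  subst e2
  rfl

noncomputable def bwd (V : Finset (Fin n)) (Γ : EnhColoredPartition V.card r) :
    ColoredPartition (n + 1) r :=
  ⟨bwdP V Γ, fun a b h => bwdColor V Γ a b ((isArc_bwdP V Γ).mp h)⟩

end Main

/-! ### Round trips -/

section RT

variable {n r : ℕ}

theorem Rbwd_fwd (Λ : ColoredPartition (n + 1) r) (a b : Fin (n + 1)) :
    Rbwd (Vset Λ) (fwd Λ).2 a b ↔ IsArc Λ.P a b := by
  constructor
  · rintro ⟨x, y, rfl, rfl, h⟩
    exact enhIsArc_QP.mp h
  · intro h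
    have hb0 : b ≠ 0 := by
      intro h0
      subst h0
      exact absurd h.1 (by simp [Fin.lt_def])
    have ha' : (a : ℕ) < n := by
      have h1 := Fin.lt_def.mp h.1
      have h2 := b.2
      omega
    have hcast : (⟨(a : ℕ), ha'⟩ : Fin n).castSucc = a := Fin.ext (by simp)
    have hsucc : (b.pred hb0).succ = b := Fin.succ_pred _ _
    have haV : (⟨(a : ℕ), ha'⟩ : Fin n) ∈ Vset Λ := mem_Vset.mpr (Or.inl ⟨b, by rwa [hcast]⟩)
    have hbV : b.pred hb0 ∈ Vset Λ := mem_Vset.mpr (Or.inr ⟨a, by rwa [hsucc]⟩)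
    obtain ⟨x, hx⟩ := emb_surj haV
    obtain ⟨y, hy⟩ := emb_surj hbV
    refine ⟨x, y, by rw [hx, hcast], by rw [hy, hsucc], ?_⟩
    refine enhIsArc_QP.mpr ?_
    show IsArc Λ.P _ _
    rw [hx, hy, hcast, hsucc]
    exact h

theorem bwd_fwd (Λ : ColoredPartition (n + 1) r) : bwd (Vset Λ) (fwd Λ).2 = Λ := by
  have hP : (bwd (Vset Λ) (fwd Λ).2).P = Λ.P := by
    apply finpartition_eq_of_isArc_iff
    intro a b
    exact (isArc_bwdP _ _).trans (Rbwd_fwd Λ a b)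
  refine CP_ext hP ?_
  intro a b h1 h2
  obtain ⟨x, y, hx, hy, harc⟩ := (isArc_bwdP (Vset Λ) (fwd Λ).2).mp h1
  show bwdColor (Vset Λ) (fwd Λ).2 a b ((isArc_bwdP (Vset Λ) (fwd Λ).2).mp h1) = Λ.color a b h2
  refine (bwdColor_eq _ _ _ hx hy harc).trans ?_
  exact color_congr hx.symm hy.symm (enhIsArc_QP.mp harc) h2

theorem Vset_bwd (V : Finset (Fin n)) (Γ : EnhColoredPartition V.card r) :
    Vset (bwd V Γ) = V := by
  ext v
  rw [mem_Vset]
  constructor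
  · rintro (⟨b, hb⟩ | ⟨a, ha⟩)
    · obtain ⟨x, y, hx, -, -⟩ := (isArc_bwdP V Γ).mp hb
      have hvx : v = emb V x := Fin.castSucc_injective _ hx
      rw [hvx]
      exact emb_mem V x
    · obtain ⟨x, y, -, hy, -⟩ := (isArc_bwdP V Γ).mp ha
      have hvy : v = emb V y := Fin.succ_injective _ hy
      rw [hvy]
      exact emb_mem V y
  · intro hv
    obtain ⟨x, hx⟩ := emb_surj hv
    rcases exists_enhArc Γ.P x with ⟨y, hy⟩ | ⟨y, hy⟩
    · exact Or.inl ⟨(emb V y).succ, (isArc_bwdP V Γ).mpr ⟨x, y, by rw [hx], rfl, hy⟩⟩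
    · exact Or.inr ⟨(emb V y).castSucc, (isArc_bwdP V Γ).mpr ⟨y, x, rfl, by rw [hx], hy⟩⟩

theorem ECP_heq {V₁ V₂ : Finset (Fin n)} (hV : V₁ = V₂)
    {Γ₁ : EnhColoredPartition V₁.card r} {Γ₂ : EnhColoredPartition V₂.card r}
    (harc : ∀ (x y : Fin V₁.card) (x' y' : Fin V₂.card), (x : ℕ) = x' → (y : ℕ) = y' →
      (EnhIsArc Γ₁.P x y ↔ EnhIsArc Γ₂.P x' y'))
    (hcol : ∀ (x y : Fin V₁.card) (x' y' : Fin V₂.card), (x : ℕ) = x' → (y : ℕ) = y' →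
      ∀ (h₁ : EnhIsArc Γ₁.P x y) (h₂ : EnhIsArc Γ₂.P x' y'),
      Γ₁.color x y h₁ = Γ₂.color x' y' h₂) : HEq Γ₁ Γ₂ := by
  subst hV
  refine heq_of_eq (ECP_ext ?_ ?_)
  · apply finpartition_eq_of_isArc_iff
    intro a b
    rw [isArc_iff_enhIsArc, isArc_iff_enhIsArc, harc a b a b rfl rfl]
  · intro a b h₁ h₂
    exact hcol a b a b rfl rfl h₁ h₂

theorem fwd_bwd (V : Finset (Fin n)) (Γ : EnhColoredPartition V.card r) :
    fwd (bwd V Γ) = ⟨V, Γ⟩ := by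
  have hV : Vset (bwd V Γ) = V := Vset_bwd V Γ
  have key : ∀ (x y : Fin (Vset (bwd V Γ)).card) (x' y' : Fin V.card),
      (x : ℕ) = x' → (y : ℕ) = y' → (Rfwd (bwd V Γ) x y ↔ EnhIsArc Γ.P x' y') := by
    intro x y x' y' hx hy
    have hex : emb (Vset (bwd V Γ)) x = emb V x' := emb_congr hV hx
    have hey : emb (Vset (bwd V Γ)) y = emb V y' := emb_congr hV hy
    constructor
    · intro hR
      obtain ⟨x₀, y₀, hx₀, hy₀, h₀⟩ := (isArc_bwdP V Γ).mp hR
      have ex : x' = x₀ := emb_inj (hex.symm.trans (Fin.castSucc_injective _ hx₀))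
      have ey : y' = y₀ := emb_inj (hey.symm.trans (Fin.succ_injective _ hy₀))
      rw [ex, ey]
      exact h₀
    · intro hE
      exact (isArc_bwdP V Γ).mpr ⟨x', y', by rw [hex], by rw [hey], hE⟩
  refine Sigma.ext hV ?_
  refine ECP_heq hV ?_ ?_
  · intro x y x' y' hx hy
    exact enhIsArc_QP.trans (key x y x' y' hx hy)
  · intro x y x' y' hx hy h₁ h₂
    show bwdColor V Γ _ _ ((isArc_bwdP V Γ).mp (enhIsArc_QP.mp h₁)) = Γ.color x' y' h₂
    exact bwdColor_eq V Γ _ (by rw [emb_congr hV hx]) (by rw [emb_congr hV hy]) h₂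

noncomputable def mainEquiv :
    ColoredPartition (n + 1) r ≃ Σ V : Finset (Fin n), EnhColoredPartition V.card r where
  toFun := fwd
  invFun s := bwd s.1 s.2
  left_inv := bwd_fwd
  right_inv s := by
    obtain ⟨V, Γ⟩ := s
    exact fwd_bwd V Γ

end RT

/-! ### Crossing and nesting transfer -/

section Cross

variable {n r : ℕ}

theorem hasCrossing_fwd (Λ : ColoredPartition (n + 1) r) (jj : ℕ) :
    HasCrossing Λ jj ↔ HasEnhCrossing (fwd Λ).2 jj := by
  constructor
  · rintro ⟨F, G, c, hF, hG, hFG, harc⟩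
    have hG0 : ∀ t, G t ≠ 0 := by
      intro t h0
      have h1 := hFG t t
      rw [h0] at h1
      exact absurd h1 (by simp [Fin.lt_def])
    have hFn : ∀ t, ((F t : ℕ)) < n := by
      intro t
      have h1 := Fin.lt_def.mp (hFG t t)
      have h2 := (G t).2
      omega
    set F' : Fin jj → Fin n := fun t => ⟨(F t : ℕ), hFn t⟩ with hF'
    set G' : Fin jj → Fin n := fun t => (G t).pred (hG0 t) with hG'
    have hcastF : ∀ t, (F' t).castSucc = F t := fun t => Fin.ext (by simp [hF'])
    have hsuccG : ∀ t, (G' t).succ = G t := fun t => Fin.succ_pred _ _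
    have hFV : ∀ t, F' t ∈ Vset Λ := by
      intro t
      refine mem_Vset.mpr (Or.inl ⟨G t, ?_⟩)
      rw [hcastF]
      exact (harc t).choose
    have hGV : ∀ t, G' t ∈ Vset Λ := by
      intro t
      refine mem_Vset.mpr (Or.inr ⟨F t, ?_⟩)
      rw [hsuccG]
      exact (harc t).choose
    choose ff hff using fun t => emb_surj (hFV t)
    choose gg hgg using fun t => emb_surj (hGV t)
    have harc' : ∀ t, Rfwd Λ (ff t) (gg t) := by
      intro t
      show IsArc Λ.P _ _
      rw [hff, hgg, hcastF, hsuccG]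
      exact (harc t).choose
    refine ⟨ff, gg, c, ?_, ?_, ?_, ?_⟩
    · intro s t hst
      refine emb_lt_emb_iff.mp ?_
      rw [hff, hff]
      exact Fin.lt_def.mpr (Fin.lt_def.mp (hF hst))
    · intro s t hst
      refine emb_lt_emb_iff.mp ?_
      rw [hgg, hgg]
      rw [Fin.lt_def]
      simp only [hG', Fin.coe_pred]
      have h2 := Fin.lt_def.mp (hG hst)
      have h3 : (G s : ℕ) ≠ 0 := fun h => hG0 s (Fin.ext h)
      omega
    · intro s t
      refine emb_le_emb_iff.mp ?_
      rw [hff, hgg]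
      rw [Fin.le_def]
      simp only [hF', hG', Fin.coe_pred]
      have h2 := Fin.lt_def.mp (hFG s t)
      omega
    · intro t
      refine ⟨enhIsArc_QP.mpr (harc' t), ?_⟩
      exact (color_congr (by rw [hff, hcastF]) (by rw [hgg, hsuccG])
        (harc' t) (harc t).choose).trans (harc t).choose_spec
  · rintro ⟨f, g, c, hf, hg, hfg, harc⟩
    refine ⟨fun t => (emb (Vset Λ) (f t)).castSucc, fun t => (emb (Vset Λ) (g t)).succ, c,
      ?_, ?_, ?_, ?_⟩
    · intro s t hst
      exact Fin.castSucc_lt_castSucc_iff.mpr (emb_lt_emb_iff.mpr (hf hst))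
    · intro s t hst
      exact Fin.succ_lt_succ_iff.mpr (emb_lt_emb_iff.mpr (hg hst))
    · intro s t
      exact Fin.castSucc_lt_succ_iff.mpr (emb_le_emb_iff.mpr (hfg s t))
    · intro t
      obtain ⟨h, hc⟩ := harc t
      exact ⟨enhIsArc_QP.mp h, hc⟩

theorem hasNesting_fwd (Λ : ColoredPartition (n + 1) r) (kk : ℕ) :
    HasNesting Λ kk ↔ HasEnhNesting (fwd Λ).2 kk := by
  constructor
  · rintro ⟨F, G, c, hF, hG, hFG, harc⟩
    have hG0 : ∀ t, G t ≠ 0 := by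
      intro t h0
      have h1 := hFG t t
      rw [h0] at h1
      exact absurd h1 (by simp [Fin.lt_def])
    have hFn : ∀ t, ((F t : ℕ)) < n := by
      intro t
      have h1 := Fin.lt_def.mp (hFG t t)
      have h2 := (G t).2
      omega
    set F' : Fin kk → Fin n := fun t => ⟨(F t : ℕ), hFn t⟩ with hF'
    set G' : Fin kk → Fin n := fun t => (G t).pred (hG0 t) with hG'
    have hcastF : ∀ t, (F' t).castSucc = F t := fun t => Fin.ext (by simp [hF'])
    have hsuccG : ∀ t, (G' t).succ = G t := fun t => Fin.succ_pred _ _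
    have hFV : ∀ t, F' t ∈ Vset Λ := by
      intro t
      refine mem_Vset.mpr (Or.inl ⟨G t, ?_⟩)
      rw [hcastF]
      exact (harc t).choose
    have hGV : ∀ t, G' t ∈ Vset Λ := by
      intro t
      refine mem_Vset.mpr (Or.inr ⟨F t, ?_⟩)
      rw [hsuccG]
      exact (harc t).choose
    choose ff hff using fun t => emb_surj (hFV t)
    choose gg hgg using fun t => emb_surj (hGV t)
    have harc' : ∀ t, Rfwd Λ (ff t) (gg t) := by
      intro t
      show IsArc Λ.P _ _
      rw [hff, hgg, hcastF, hsuccG]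
      exact (harc t).choose
    refine ⟨ff, gg, c, ?_, ?_, ?_, ?_⟩
    · intro s t hst
      refine emb_lt_emb_iff.mp ?_
      rw [hff, hff]
      exact Fin.lt_def.mpr (Fin.lt_def.mp (hF hst))
    · intro s t hst
      refine emb_lt_emb_iff.mp ?_
      rw [hgg, hgg]
      rw [Fin.lt_def]
      simp only [hG', Fin.coe_pred]
      have h2 := Fin.lt_def.mp (hG hst)
      have h3 : (G t : ℕ) ≠ 0 := fun h => hG0 t (Fin.ext h)
      omega
    · intro s t
      refine emb_le_emb_iff.mp ?_
      rw [hff, hgg]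
      rw [Fin.le_def]
      simp only [hF', hG', Fin.coe_pred]
      have h2 := Fin.lt_def.mp (hFG s t)
      omega
    · intro t
      refine ⟨enhIsArc_QP.mpr (harc' t), ?_⟩
      exact (color_congr (by rw [hff, hcastF]) (by rw [hgg, hsuccG])
        (harc' t) (harc t).choose).trans (harc t).choose_spec
  · rintro ⟨f, g, c, hf, hg, hfg, harc⟩
    refine ⟨fun t => (emb (Vset Λ) (f t)).castSucc, fun t => (emb (Vset Λ) (g t)).succ, c,
      ?_, ?_, ?_, ?_⟩
    · intro s t hst
      exact Fin.castSucc_lt_castSucc_iff.mpr (emb_lt_emb_iff.mpr (hf hst))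
    · intro s t hst
      exact Fin.succ_lt_succ_iff.mpr (emb_lt_emb_iff.mpr (hg hst))
    · intro s t
      exact Fin.castSucc_lt_succ_iff.mpr (emb_le_emb_iff.mpr (hfg s t))
    · intro t
      obtain ⟨h, hc⟩ := harc t
      exact ⟨enhIsArc_QP.mp h, hc⟩

end Cross

/-! ### Counting -/

def sigmaSubtypeEquiv {ι : Type*} (β : ι → Type*) (p : ∀ i, β i → Prop) :
    {s : Σ i, β i // p s.1 s.2} ≃ Σ i, {x : β i // p i x} where
  toFun s := ⟨s.1.1, s.1.2, s.2⟩
  invFun t := ⟨⟨t.1, t.2.1⟩, t.2.2⟩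
  left_inv := fun ⟨⟨i, x⟩, h⟩ => rfl
  right_inv := fun ⟨i, x, h⟩ => rfl

theorem natCard_sigma {ι : Type*} [Fintype ι] (β : ι → Type*) [∀ i, Finite (β i)] :
    Nat.card (Σ i, β i) = ∑ i, Nat.card (β i) := by
  letI : ∀ i, Fintype (β i) := fun i => Fintype.ofFinite _
  simp only [Nat.card_eq_fintype_card]
  exact Fintype.card_sigma

end Stmt15Aux

/-- `NCN_{j,k}(n+1, r) = Σ_{i=0}^n C(n,i) · ENCN_{j,k}(i, r)`. -/
theorem stmt15 (j k r n : ℕ) (hj : 0 < j) (hk : 0 < k) (hr : 0 < r) :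
    NCNcount (n + 1) r j k =
      ∑ i ∈ Finset.range (n + 1), Nat.choose n i * ENCNcount i r j k := by
  classical
  have E1 : {Λ : ColoredPartition (n + 1) r // ¬HasCrossing Λ j ∧ ¬HasNesting Λ k} ≃
      Σ V : Finset (Fin n), {Γ : EnhColoredPartition V.card r //
        ¬HasEnhCrossing Γ j ∧ ¬HasEnhNesting Γ k} := by
    refine Equiv.trans (Equiv.subtypeEquiv Stmt15Aux.mainEquiv ?_)
      (Stmt15Aux.sigmaSubtypeEquiv _ _)
    intro Λ
    constructor
    · rintro ⟨h1, h2⟩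
      exact ⟨fun h => h1 ((Stmt15Aux.hasCrossing_fwd Λ j).mpr h),
        fun h => h2 ((Stmt15Aux.hasNesting_fwd Λ k).mpr h)⟩
    · rintro ⟨h1, h2⟩
      exact ⟨fun h => h1 ((Stmt15Aux.hasCrossing_fwd Λ j).mp h),
        fun h => h2 ((Stmt15Aux.hasNesting_fwd Λ k).mp h)⟩
  have h1 : NCNcount (n + 1) r j k = Nat.card
      (Σ V : Finset (Fin n), {Γ : EnhColoredPartition V.card r //
        ¬HasEnhCrossing Γ j ∧ ¬HasEnhNesting Γ k}) := Nat.card_congr E1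
  rw [h1, Stmt15Aux.natCard_sigma]
  show (∑ V : Finset (Fin n), ENCNcount V.card r j k) = _
  have h3 : ∀ x ∈ (Finset.univ : Finset (Finset (Fin n))), x.card ∈ Finset.range (n + 1) := by
    intro x hx
    rw [Finset.mem_range]
    have h4 := Finset.card_le_card (Finset.subset_univ x)
    rw [Finset.card_univ, Fintype.card_fin] at h4
    omega
  rw [← Finset.sum_fiberwise_of_maps_to h3]
  refine Finset.sum_congr rfl ?_
  intro i hi
  have h4 : ∀ V ∈ Finset.univ.filter (fun V : Finset (Fin n) => V.card = i),
      ENCNcount V.card r j k = ENCNcount i r j k := by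
    intro V hV
    rw [(Finset.mem_filter.mp hV).2]
  rw [Finset.sum_congr rfl h4, Finset.sum_const, smul_eq_mul]
  congr 1
  have h5 : Finset.univ.filter (fun V : Finset (Fin n) => V.card = i) =
      Finset.powersetCard i Finset.univ := by
    rw [Finset.powersetCard_eq_filter, Finset.powerset_univ]
  rw [h5, Finset.card_powersetCard, Finset.card_univ, Fintype.card_fin]
end

section
/- There is a bijection from r-colored j-noncrossing k-nonnesting permutations of [n] to pairs (Λ⁺, Λ⁻) of r-colored j-noncrossing k-nonnesting matchings of [2n] such that the odd numbers {1,3,...,2n−1} form the disjoint union of min(Λ⁺)\max(Λ⁺) and max(Λ⁻)\min(Λ⁻), and the even numbers {2,4,...,2n} form the disjoint union of max(Λ⁺)\min(Λ⁺) and min(Λ⁻)\max(Λ⁻). -/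
open Finset

section General
variable {m : ℕ} {P : Finpartition (Finset.univ : Finset (Fin m))}

lemma blockMin_iff {x : Fin m} : x ∈ blockMin P ↔ ∀ k ∈ P.part x, x ≤ k := by
  constructor
  · rintro ⟨B, hB, hx, h⟩
    rwa [P.part_eq_of_mem hB hx]
  · intro h
    exact ⟨P.part x, P.part_mem.2 (mem_univ x), P.mem_part (mem_univ x), h⟩

lemma blockMax_iff {x : Fin m} : x ∈ blockMax P ↔ ∀ k ∈ P.part x, k ≤ x := by
  constructor
  · rintro ⟨B, hB, hx, h⟩
    rwa [P.part_eq_of_mem hB hx]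
  · intro h
    exact ⟨P.part x, P.part_mem.2 (mem_univ x), P.mem_part (mem_univ x), h⟩

lemma isArc_iff {a b : Fin m} :
    IsArc P a b ↔ a < b ∧ b ∈ P.part a ∧ ∀ k ∈ P.part a, a < k → b ≤ k := by
  constructor
  · rintro ⟨hab, B, hB, ha, hb, h⟩
    rw [P.part_eq_of_mem hB ha]
    exact ⟨hab, hb, h⟩
  · rintro ⟨hab, hb, h⟩
    exact ⟨hab, P.part a, P.part_mem.2 (mem_univ a), P.mem_part (mem_univ a), hb, h⟩

end General

section Inv
variable {m : ℕ}

/-- The setoid pairing `x` with `τ x`. -/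
def mSetoid (τ : Fin m → Fin m) (hτ : Function.Involutive τ) : Setoid (Fin m) :=
  { r := fun x y => x = y ∨ τ x = y
    iseqv := by
        constructor
        · exact fun x => Or.inl rfl
        · rintro x y (rfl | rfl)
          · exact Or.inl rfl
          · exact Or.inr (hτ x)
        · rintro x y z (rfl | rfl) (rfl | h)
          · exact Or.inl rfl
          · exact Or.inr h
          · exact Or.inr rfl
          · exact Or.inl ((hτ x) ▸ h ▸ rfl) }

instance (τ : Fin m → Fin m) (hτ : Function.Involutive τ) : DecidableRel (mSetoid τ hτ).r :=
  fun x y => inferInstanceAs (Decidable (x = y ∨ τ x = y))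

/-- The matching associated to an involution. -/
def mpart (τ : Fin m → Fin m) (hτ : Function.Involutive τ) :
    Finpartition (Finset.univ : Finset (Fin m)) :=
  Finpartition.ofSetoid (mSetoid τ hτ)

lemma mpart_part (τ : Fin m → Fin m) (hτ : Function.Involutive τ) (x : Fin m) :
    (mpart τ hτ).part x = {x, τ x} := by
  ext b
  rw [mpart, Finpartition.mem_part_ofSetoid_iff_rel]
  show x = b ∨ τ x = b ↔ _
  simp [eq_comm, or_comm]

lemma mem_mpart_parts {τ : Fin m → Fin m} {hτ : Function.Involutive τ} {B : Finset (Fin m)} :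
    B ∈ (mpart τ hτ).parts ↔ ∃ x, B = {x, τ x} := by
  constructor
  · intro hB
    obtain ⟨x, -, hx⟩ := (mpart τ hτ).part_surjOn hB
    exact ⟨x, by rw [← hx, mpart_part]⟩
  · rintro ⟨x, rfl⟩
    rw [← mpart_part τ hτ x]
    exact (mpart τ hτ).part_mem.2 (mem_univ x)

lemma isArc_mpart {τ : Fin m → Fin m} {hτ : Function.Involutive τ} {a b : Fin m} :
    IsArc (mpart τ hτ) a b ↔ a < b ∧ τ a = b := by
  rw [isArc_iff, mpart_part]
  constructor
  · rintro ⟨hab, hb, -⟩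
    refine ⟨hab, ?_⟩
    rcases mem_insert.1 hb with rfl | hb
    · exact absurd hab (lt_irrefl _)
    · exact (mem_singleton.1 hb).symm
  · rintro ⟨hab, rfl⟩
    refine ⟨hab, by simp, ?_⟩
    intro k hk hak
    rcases mem_insert.1 hk with rfl | hk
    · exact absurd hak (lt_irrefl _)
    · exact le_of_eq (mem_singleton.1 hk).symm

lemma blockMin_mpart {τ : Fin m → Fin m} {hτ : Function.Involutive τ} {x : Fin m} :
    x ∈ blockMin (mpart τ hτ) ↔ x ≤ τ x := by
  rw [blockMin_iff]
  constructor
  · intro h; exact h _ (by rw [mpart_part]; simp)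
  · intro h k hk
    rw [mpart_part] at hk
    rcases mem_insert.1 hk with rfl | hk
    · exact le_refl _
    · exact (mem_singleton.1 hk) ▸ h

lemma blockMax_mpart {τ : Fin m → Fin m} {hτ : Function.Involutive τ} {x : Fin m} :
    x ∈ blockMax (mpart τ hτ) ↔ τ x ≤ x := by
  rw [blockMax_iff]
  constructor
  · intro h; exact h _ (by rw [mpart_part]; simp)
  · intro h k hk
    rw [mpart_part] at hk
    rcases mem_insert.1 hk with rfl | hk
    · exact le_refl _
    · exact (mem_singleton.1 hk) ▸ h

lemma isMatching_mpart {τ : Fin m → Fin m} {hτ : Function.Involutive τ} :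
    IsMatching (mpart τ hτ) := by
  intro B hB
  obtain ⟨x, rfl⟩ := mem_mpart_parts.1 hB
  exact card_insert_le _ _ |>.trans (by simp)

/-- The involution associated to a matching. -/
noncomputable def mtau (P : Finpartition (Finset.univ : Finset (Fin m))) (x : Fin m) : Fin m :=
  if h : ∃ y, y ∈ P.part x ∧ y ≠ x then h.choose else x

lemma mtau_mem (P : Finpartition (Finset.univ : Finset (Fin m))) (x : Fin m) :
    mtau P x ∈ P.part x := by
  rw [mtau]
  split
  · next h => exact h.choose_spec.1
  · exact P.mem_part (mem_univ x)

lemma part_eq_mtau (P : Finpartition (Finset.univ : Finset (Fin m))) (hM : IsMatching P)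
    (x : Fin m) : P.part x = {x, mtau P x} := by
  by_cases h : ∃ y, y ∈ P.part x ∧ y ≠ x
  · rw [mtau, dif_pos h]
    obtain ⟨hy, hyx⟩ := h.choose_spec
    refine (Finset.eq_of_subset_of_card_le ?_ ?_).symm
    · intro k hk
      rcases mem_insert.1 hk with h' | h'
      · rw [h']; exact P.mem_part (mem_univ x)
      · rw [mem_singleton.1 h']; exact hy
    · rw [card_insert_of_notMem, card_singleton]
      · exact hM _ (P.part_mem.2 (mem_univ x))
      · simp only [mem_singleton]
        exact fun hc => hyx hc.symm
  · rw [mtau, dif_neg h]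
    push_neg at h
    rw [insert_eq_self.2 (mem_singleton_self x)]
    apply Finset.eq_singleton_iff_unique_mem.2
    exact ⟨P.mem_part (mem_univ x), fun y hy => h y hy⟩

lemma mtau_invol (P : Finpartition (Finset.univ : Finset (Fin m))) (hM : IsMatching P) :
    Function.Involutive (mtau P) := by
  intro x
  by_cases hx : mtau P x = x
  · rw [hx, hx]
  · have h1 : P.part (mtau P x) = P.part x :=
      P.part_eq_of_mem (P.part_mem.2 (mem_univ x)) (mtau_mem P x)
    have h2 := mtau_mem P (mtau P x)
    rw [h1, part_eq_mtau P hM x] at h2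
    rcases mem_insert.1 h2 with h | h
    · exact h
    · exfalso
      have h3 := mem_singleton.1 h
      by_cases hex : ∃ y, y ∈ P.part (mtau P x) ∧ y ≠ mtau P x
      · rw [mtau, dif_pos hex] at h3
        exact hex.choose_spec.2 h3
      · push_neg at hex
        exact hx (hex x (by rw [h1]; exact P.mem_part (mem_univ x))).symm

lemma mpart_mtau (P : Finpartition (Finset.univ : Finset (Fin m))) (hM : IsMatching P) :
    mpart (mtau P) (mtau_invol P hM) = P := by
  ext B
  rw [mem_mpart_parts]
  constructor
  · rintro ⟨x, rfl⟩
    rw [← part_eq_mtau P hM x]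
    exact P.part_mem.2 (mem_univ x)
  · intro hB
    obtain ⟨x, hx⟩ := P.nonempty_of_mem_parts hB
    exact ⟨x, by rw [← part_eq_mtau P hM x, P.part_eq_of_mem hB hx]⟩

lemma mtau_mpart (τ : Fin m → Fin m) (hτ : Function.Involutive τ) :
    mtau (mpart τ hτ) = τ := by
  funext x
  by_cases hex : ∃ y, y ∈ (mpart τ hτ).part x ∧ y ≠ x
  · rw [mtau, dif_pos hex]
    obtain ⟨hy, hyx⟩ := hex.choose_spec
    have hy' : hex.choose ∈ ({x, τ x} : Finset (Fin m)) := by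
      rw [← mpart_part τ hτ x]; exact hy
    rcases mem_insert.1 hy' with h' | h'
    · exact absurd h' hyx
    · exact mem_singleton.1 h'
  · rw [mtau, dif_neg hex]
    push_neg at hex
    exact (hex (τ x) (by rw [mpart_part]; simp)).symm

lemma mtau_blockMin {P : Finpartition (Finset.univ : Finset (Fin m))} (hM : IsMatching P)
    {x : Fin m} : x ∈ blockMin P ↔ x ≤ mtau P x := by
  conv_lhs => rw [← mpart_mtau P hM]
  exact blockMin_mpart

lemma mtau_blockMax {P : Finpartition (Finset.univ : Finset (Fin m))} (hM : IsMatching P)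
    {x : Fin m} : x ∈ blockMax P ↔ mtau P x ≤ x := by
  conv_lhs => rw [← mpart_mtau P hM]
  exact blockMax_mpart

lemma isArc_mtau {P : Finpartition (Finset.univ : Finset (Fin m))} (hM : IsMatching P)
    {a b : Fin m} : IsArc P a b ↔ a < b ∧ mtau P a = b := by
  conv_lhs => rw [← mpart_mtau P hM]
  exact isArc_mpart

end Inv

section Double
variable {n : ℕ}

def half (x : Fin (2 * n)) : Fin n := ⟨x.1 / 2, by have := x.2; omega⟩

@[simp] lemma half_dbl (i : Fin n) : half (dbl i) = i := by
  apply Fin.ext; show 2 * i.1 / 2 = i.1; omega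

@[simp] lemma half_dbl1 (i : Fin n) : half (dbl1 i) = i := by
  apply Fin.ext; show (2 * i.1 + 1) / 2 = i.1; omega

@[simp] lemma dbl_mod (i : Fin n) : (dbl i).1 % 2 = 0 := by show 2 * i.1 % 2 = 0; omega

@[simp] lemma dbl1_mod (i : Fin n) : (dbl1 i).1 % 2 = 1 := by
  show (2 * i.1 + 1) % 2 = 1; omega

lemma dbl_half {x : Fin (2 * n)} (h : x.1 % 2 = 0) : dbl (half x) = x := by
  apply Fin.ext; simp [dbl, half]; omega

lemma dbl1_half {x : Fin (2 * n)} (h : x.1 % 2 = 1) : dbl1 (half x) = x := by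
  apply Fin.ext; simp [dbl1, half]; omega

lemma dbl_lt_dbl1 {i j : Fin n} : dbl i < dbl1 j ↔ i ≤ j := by
  rw [Fin.lt_def, Fin.le_def]; show 2 * i.1 < 2 * j.1 + 1 ↔ i.1 ≤ j.1; omega

lemma dbl1_lt_dbl {i j : Fin n} : dbl1 i < dbl j ↔ i < j := by
  rw [Fin.lt_def, Fin.lt_def]; show 2 * i.1 + 1 < 2 * j.1 ↔ i.1 < j.1; omega

lemma dbl_lt_dbl {i j : Fin n} : dbl i < dbl j ↔ i < j := by
  rw [Fin.lt_def, Fin.lt_def]; show 2 * i.1 < 2 * j.1 ↔ i.1 < j.1; omega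

lemma dbl1_lt_dbl1 {i j : Fin n} : dbl1 i < dbl1 j ↔ i < j := by
  rw [Fin.lt_def, Fin.lt_def]; show 2 * i.1 + 1 < 2 * j.1 + 1 ↔ i.1 < j.1; omega

lemma dbl_inj {i j : Fin n} : dbl i = dbl j ↔ i = j := by
  constructor
  · intro h; apply Fin.ext
    have := congrArg Fin.val h
    simp [dbl] at this; omega
  · rintro rfl; rfl

lemma dbl1_inj {i j : Fin n} : dbl1 i = dbl1 j ↔ i = j := by
  constructor
  · intro h; apply Fin.ext
    have := congrArg Fin.val h
    simp [dbl1] at this; omega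
  · rintro rfl; rfl

lemma strictMono_dbl : StrictMono (dbl : Fin n → Fin (2 * n)) :=
  fun _ _ h => dbl_lt_dbl.2 h

lemma strictMono_dbl1 : StrictMono (dbl1 : Fin n → Fin (2 * n)) :=
  fun _ _ h => dbl1_lt_dbl1.2 h

end Double

section Forward
variable {n r : ℕ}

def tplus (σ : Equiv.Perm (Fin n)) : Fin (2 * n) → Fin (2 * n) := fun x =>
  if x.1 % 2 = 0 then
    (if half x ≤ σ (half x) then dbl1 (σ (half x)) else x)
  else
    (if σ.symm (half x) ≤ half x then dbl (σ.symm (half x)) else x)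

def tminus (σ : Equiv.Perm (Fin n)) : Fin (2 * n) → Fin (2 * n) := fun x =>
  if x.1 % 2 = 0 then
    (if σ (half x) < half x then dbl1 (σ (half x)) else x)
  else
    (if half x < σ.symm (half x) then dbl (σ.symm (half x)) else x)

lemma tplus_dbl (σ : Equiv.Perm (Fin n)) (i : Fin n) :
    tplus σ (dbl i) = if i ≤ σ i then dbl1 (σ i) else dbl i := by
  simp [tplus]

lemma tplus_dbl1 (σ : Equiv.Perm (Fin n)) (m : Fin n) :
    tplus σ (dbl1 m) = if σ.symm m ≤ m then dbl (σ.symm m) else dbl1 m := by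
  simp [tplus]

lemma tminus_dbl (σ : Equiv.Perm (Fin n)) (i : Fin n) :
    tminus σ (dbl i) = if σ i < i then dbl1 (σ i) else dbl i := by
  simp [tminus]

lemma tminus_dbl1 (σ : Equiv.Perm (Fin n)) (m : Fin n) :
    tminus σ (dbl1 m) = if m < σ.symm m then dbl (σ.symm m) else dbl1 m := by
  simp [tminus]

lemma tplus_invol (σ : Equiv.Perm (Fin n)) : Function.Involutive (tplus σ) := by
  intro x
  rcases Nat.mod_two_eq_zero_or_one x.1 with hx | hx
  · rw [← dbl_half hx, tplus_dbl]
    split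
    · next h => rw [tplus_dbl1]; simp [h]
    · rw [tplus_dbl]; simp [*]
  · rw [← dbl1_half hx, tplus_dbl1]
    split
    · next h => rw [tplus_dbl]; simp [h]
    · rw [tplus_dbl1]; simp [*]

lemma tminus_invol (σ : Equiv.Perm (Fin n)) : Function.Involutive (tminus σ) := by
  intro x
  rcases Nat.mod_two_eq_zero_or_one x.1 with hx | hx
  · rw [← dbl_half hx, tminus_dbl]
    split
    · next h => rw [tminus_dbl1]; simp [h]
    · rw [tminus_dbl]; simp [*]
  · rw [← dbl1_half hx, tminus_dbl1]
    split
    · next h => rw [tminus_dbl]; simp [h]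
    · rw [tminus_dbl1]; simp [*]

lemma arc_tplus {σ : Equiv.Perm (Fin n)} {a b : Fin (2 * n)} :
    IsArc (mpart (tplus σ) (tplus_invol σ)) a b ↔
      ∃ i : Fin n, i ≤ σ i ∧ a = dbl i ∧ b = dbl1 (σ i) := by
  rw [isArc_mpart]
  constructor
  · rintro ⟨hab, rfl⟩
    rcases Nat.mod_two_eq_zero_or_one a.1 with hx | hx
    · rw [← dbl_half hx] at hab ⊢
      rw [tplus_dbl] at hab ⊢
      split at hab
      · next h => exact ⟨half a, h, rfl, by rw [if_pos h]⟩
      · exact absurd hab (lt_irrefl _)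
    · rw [← dbl1_half hx] at hab ⊢
      rw [tplus_dbl1] at hab ⊢
      split at hab
      · next h =>
        exfalso
        rw [Fin.lt_def] at hab
        simp [dbl, dbl1] at hab
        have := Fin.le_def.1 h
        omega
      · exact absurd hab (lt_irrefl _)
  · rintro ⟨i, hi, rfl, rfl⟩
    refine ⟨dbl_lt_dbl1.2 hi, ?_⟩
    rw [tplus_dbl, if_pos hi]

lemma arc_tminus {σ : Equiv.Perm (Fin n)} {a b : Fin (2 * n)} :
    IsArc (mpart (tminus σ) (tminus_invol σ)) a b ↔
      ∃ i : Fin n, σ i < i ∧ a = dbl1 (σ i) ∧ b = dbl i := by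
  rw [isArc_mpart]
  constructor
  · rintro ⟨hab, rfl⟩
    rcases Nat.mod_two_eq_zero_or_one a.1 with hx | hx
    · rw [← dbl_half hx] at hab ⊢
      rw [tminus_dbl] at hab ⊢
      split at hab
      · next h =>
        exfalso
        rw [Fin.lt_def] at hab
        simp [dbl, dbl1] at hab
        have := Fin.lt_def.1 h
        omega
      · exact absurd hab (lt_irrefl _)
    · rw [← dbl1_half hx] at hab ⊢
      rw [tminus_dbl1] at hab ⊢
      split at hab
      · next h =>
        refine ⟨σ.symm (half a), ?_, ?_, by rw [if_pos h]⟩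
        · rw [Equiv.apply_symm_apply]; exact h
        · rw [Equiv.apply_symm_apply]
      · exact absurd hab (lt_irrefl _)
  · rintro ⟨i, hi, rfl, rfl⟩
    refine ⟨dbl1_lt_dbl.2 hi, ?_⟩
    rw [tminus_dbl1]
    simp [hi]

lemma arc_tplus_le {S : ColoredPerm n r} {a b : Fin (2 * n)}
    (h : IsArc (mpart (tplus S.sigma) (tplus_invol S.sigma)) a b) :
    half a ≤ S.sigma (half a) := by
  obtain ⟨i, hi, rfl, -⟩ := arc_tplus.1 h
  rwa [half_dbl]

lemma arc_tminus_lt {S : ColoredPerm n r} {a b : Fin (2 * n)}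
    (h : IsArc (mpart (tminus S.sigma) (tminus_invol S.sigma)) a b) :
    S.sigma (half b) < half b := by
  obtain ⟨i, hi, -, rfl⟩ := arc_tminus.1 h
  rwa [half_dbl]

def fwdPlus (S : ColoredPerm n r) : ColoredPartition (2 * n) r where
  P := mpart (tplus S.sigma) (tplus_invol S.sigma)
  color := fun a _ h => S.cplus (half a) (arc_tplus_le h)

def fwdMinus (S : ColoredPerm n r) : ColoredPartition (2 * n) r where
  P := mpart (tminus S.sigma) (tminus_invol S.sigma)
  color := fun _ b h => S.cminus (half b) (arc_tminus_lt h)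

lemma cplus_congr (S : ColoredPerm n r) {i i' : Fin n} (e : i = i')
    (h : i ≤ S.sigma i) (h' : i' ≤ S.sigma i') : S.cplus i h = S.cplus i' h' := by
  subst e; rfl

lemma cminus_congr (S : ColoredPerm n r) {i i' : Fin n} (e : i = i')
    (h : S.sigma i < i) (h' : S.sigma i' < i') : S.cminus i h = S.cminus i' h' := by
  subst e; rfl

lemma color_congr (Λ : ColoredPartition n r) {a a' b b' : Fin n} (ea : a = a') (eb : b = b')
    (h : IsArc Λ.P a b) (h' : IsArc Λ.P a' b') : Λ.color a b h = Λ.color a' b' h' := by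
  subst ea; subst eb; rfl

end Forward

section CrossIff
variable {n r k : ℕ} {S : ColoredPerm n r}

lemma smono_dbl {α : Type*} [Preorder α] {F : α → Fin n} :
    StrictMono (fun t => dbl (F t)) ↔ StrictMono F :=
  ⟨fun h a b hab => dbl_lt_dbl.1 (h hab), fun h a b hab => dbl_lt_dbl.2 (h hab)⟩

lemma smono_dbl1 {α : Type*} [Preorder α] {F : α → Fin n} :
    StrictMono (fun t => dbl1 (F t)) ↔ StrictMono F :=
  ⟨fun h a b hab => dbl1_lt_dbl1.1 (h hab), fun h a b hab => dbl1_lt_dbl1.2 (h hab)⟩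

lemma santi_dbl {α : Type*} [Preorder α] {F : α → Fin n} :
    StrictAnti (fun t => dbl (F t)) ↔ StrictAnti F :=
  ⟨fun h a b hab => dbl_lt_dbl.1 (h hab), fun h a b hab => dbl_lt_dbl.2 (h hab)⟩

lemma santi_dbl1 {α : Type*} [Preorder α] {F : α → Fin n} :
    StrictAnti (fun t => dbl1 (F t)) ↔ StrictAnti F :=
  ⟨fun h a b hab => dbl1_lt_dbl1.1 (h hab), fun h a b hab => dbl1_lt_dbl1.2 (h hab)⟩

lemma hasCrossing_fwdPlus :
    HasCrossing (fwdPlus S) k ↔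
      ∃ (f : Fin k → Fin n) (c : Fin r),
        StrictMono f ∧ StrictMono (fun t => S.sigma (f t)) ∧
        (∀ s t : Fin k, f s ≤ S.sigma (f t)) ∧
        ∀ t, ∃ h : f t ≤ S.sigma (f t), S.cplus (f t) h = c := by
  constructor
  · rintro ⟨f, g, c, hf, hg, hfg, harc⟩
    have key : ∀ t, ∃ i : Fin n, i ≤ S.sigma i ∧ f t = dbl i ∧ g t = dbl1 (S.sigma i) := by
      intro t
      obtain ⟨h, -⟩ := harc t
      exact arc_tplus.1 h
    choose F hF hfF hgF using key
    refine ⟨F, c, ?_, ?_, ?_, ?_⟩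
    · intro a b hab
      have := hf hab
      rw [hfF a, hfF b, dbl_lt_dbl] at this
      exact this
    · intro a b hab
      have := hg hab
      rw [hgF a, hgF b, dbl1_lt_dbl1] at this
      exact this
    · intro s t
      have := hfg s t
      rw [hfF s, hgF t, dbl_lt_dbl1] at this
      exact this
    · intro t
      obtain ⟨h, hc⟩ := harc t
      refine ⟨hF t, ?_⟩
      rw [← hc]
      show _ = S.cplus (half (f t)) (arc_tplus_le h)
      apply cplus_congr
      rw [hfF t, half_dbl]
  · rintro ⟨F, c, hF, hsF, hFle, hcol⟩
    refine ⟨fun t => dbl (F t), fun t => dbl1 (S.sigma (F t)), c,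
      smono_dbl.2 hF, smono_dbl1.2 hsF, fun s t => dbl_lt_dbl1.2 (hFle s t), ?_⟩
    intro t
    obtain ⟨h, hc⟩ := hcol t
    refine ⟨arc_tplus.2 ⟨F t, h, rfl, rfl⟩, ?_⟩
    show S.cplus (half (dbl (F t))) _ = c
    rw [← hc]
    apply cplus_congr
    rw [half_dbl]

lemma hasNesting_fwdPlus :
    HasNesting (fwdPlus S) k ↔
      ∃ (f : Fin k → Fin n) (c : Fin r),
        StrictMono f ∧ StrictAnti (fun t => S.sigma (f t)) ∧
        (∀ s t : Fin k, f s ≤ S.sigma (f t)) ∧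
        ∀ t, ∃ h : f t ≤ S.sigma (f t), S.cplus (f t) h = c := by
  constructor
  · rintro ⟨f, g, c, hf, hg, hfg, harc⟩
    have key : ∀ t, ∃ i : Fin n, i ≤ S.sigma i ∧ f t = dbl i ∧ g t = dbl1 (S.sigma i) := by
      intro t
      obtain ⟨h, -⟩ := harc t
      exact arc_tplus.1 h
    choose F hF hfF hgF using key
    refine ⟨F, c, ?_, ?_, ?_, ?_⟩
    · intro a b hab
      have := hf hab
      rw [hfF a, hfF b, dbl_lt_dbl] at this
      exact this
    · intro a b hab
      have := hg hab
      rw [hgF a, hgF b, dbl1_lt_dbl1] at this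
      exact this
    · intro s t
      have := hfg s t
      rw [hfF s, hgF t, dbl_lt_dbl1] at this
      exact this
    · intro t
      obtain ⟨h, hc⟩ := harc t
      refine ⟨hF t, ?_⟩
      rw [← hc]
      show _ = S.cplus (half (f t)) (arc_tplus_le h)
      apply cplus_congr
      rw [hfF t, half_dbl]
  · rintro ⟨F, c, hF, hsF, hFle, hcol⟩
    refine ⟨fun t => dbl (F t), fun t => dbl1 (S.sigma (F t)), c,
      smono_dbl.2 hF, santi_dbl1.2 hsF, fun s t => dbl_lt_dbl1.2 (hFle s t), ?_⟩
    intro t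
    obtain ⟨h, hc⟩ := hcol t
    refine ⟨arc_tplus.2 ⟨F t, h, rfl, rfl⟩, ?_⟩
    show S.cplus (half (dbl (F t))) _ = c
    rw [← hc]
    apply cplus_congr
    rw [half_dbl]

lemma hasCrossing_fwdMinus :
    HasCrossing (fwdMinus S) k ↔
      ∃ (f : Fin k → Fin n) (c : Fin r),
        StrictMono (fun t => S.sigma (f t)) ∧ StrictMono f ∧
        (∀ s t : Fin k, S.sigma (f s) < f t) ∧
        ∀ t, ∃ h : S.sigma (f t) < f t, S.cminus (f t) h = c := by
  constructor
  · rintro ⟨f, g, c, hf, hg, hfg, harc⟩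
    have key : ∀ t, ∃ i : Fin n, S.sigma i < i ∧ f t = dbl1 (S.sigma i) ∧ g t = dbl i := by
      intro t
      obtain ⟨h, -⟩ := harc t
      exact arc_tminus.1 h
    choose F hF hfF hgF using key
    refine ⟨F, c, ?_, ?_, ?_, ?_⟩
    · intro a b hab
      have := hf hab
      rw [hfF a, hfF b, dbl1_lt_dbl1] at this
      exact this
    · intro a b hab
      have := hg hab
      rw [hgF a, hgF b, dbl_lt_dbl] at this
      exact this
    · intro s t
      have := hfg s t
      rw [hfF s, hgF t, dbl1_lt_dbl] at this
      exact this
    · intro t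
      obtain ⟨h, hc⟩ := harc t
      refine ⟨hF t, ?_⟩
      rw [← hc]
      show _ = S.cminus (half (g t)) (arc_tminus_lt h)
      apply cminus_congr
      rw [hgF t, half_dbl]
  · rintro ⟨F, c, hsF, hF, hFlt, hcol⟩
    refine ⟨fun t => dbl1 (S.sigma (F t)), fun t => dbl (F t), c,
      smono_dbl1.2 hsF, smono_dbl.2 hF, fun s t => dbl1_lt_dbl.2 (hFlt s t), ?_⟩
    intro t
    obtain ⟨h, hc⟩ := hcol t
    refine ⟨arc_tminus.2 ⟨F t, h, rfl, rfl⟩, ?_⟩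
    show S.cminus (half (dbl (F t))) _ = c
    rw [← hc]
    apply cminus_congr
    rw [half_dbl]

lemma hasNesting_fwdMinus :
    HasNesting (fwdMinus S) k ↔
      ∃ (f : Fin k → Fin n) (c : Fin r),
        StrictMono (fun t => S.sigma (f t)) ∧ StrictAnti f ∧
        (∀ s t : Fin k, S.sigma (f s) < f t) ∧
        ∀ t, ∃ h : S.sigma (f t) < f t, S.cminus (f t) h = c := by
  constructor
  · rintro ⟨f, g, c, hf, hg, hfg, harc⟩
    have key : ∀ t, ∃ i : Fin n, S.sigma i < i ∧ f t = dbl1 (S.sigma i) ∧ g t = dbl i := by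
      intro t
      obtain ⟨h, -⟩ := harc t
      exact arc_tminus.1 h
    choose F hF hfF hgF using key
    refine ⟨F, c, ?_, ?_, ?_, ?_⟩
    · intro a b hab
      have := hf hab
      rw [hfF a, hfF b, dbl1_lt_dbl1] at this
      exact this
    · intro a b hab
      have := hg hab
      rw [hgF a, hgF b, dbl_lt_dbl] at this
      exact this
    · intro s t
      have := hfg s t
      rw [hfF s, hgF t, dbl1_lt_dbl] at this
      exact this
    · intro t
      obtain ⟨h, hc⟩ := harc t
      refine ⟨hF t, ?_⟩
      rw [← hc]
      show _ = S.cminus (half (g t)) (arc_tminus_lt h)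
      apply cminus_congr
      rw [hgF t, half_dbl]
  · rintro ⟨F, c, hsF, hF, hFlt, hcol⟩
    refine ⟨fun t => dbl1 (S.sigma (F t)), fun t => dbl (F t), c,
      smono_dbl1.2 hsF, santi_dbl.2 hF, fun s t => dbl1_lt_dbl.2 (hFlt s t), ?_⟩
    intro t
    obtain ⟨h, hc⟩ := hcol t
    refine ⟨arc_tminus.2 ⟨F t, h, rfl, rfl⟩, ?_⟩
    show S.cminus (half (dbl (F t))) _ = c
    rw [← hc]
    apply cminus_congr
    rw [half_dbl]

lemma permHasCrossing_iff :
    PermHasCrossing S k ↔ HasCrossing (fwdPlus S) k ∨ HasCrossing (fwdMinus S) k := by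
  rw [PermHasCrossing, hasCrossing_fwdPlus, hasCrossing_fwdMinus]

lemma permHasNesting_iff :
    PermHasNesting S k ↔ HasNesting (fwdPlus S) k ∨ HasNesting (fwdMinus S) k := by
  rw [PermHasNesting, hasNesting_fwdPlus, hasNesting_fwdMinus]

end CrossIff

section FwdSets
variable {n r : ℕ}

lemma lt_tplus_iff (σ : Equiv.Perm (Fin n)) (x : Fin (2 * n)) :
    x < tplus σ x ↔ x.1 % 2 = 0 ∧ half x ≤ σ (half x) := by
  rcases Nat.mod_two_eq_zero_or_one x.1 with hx | hx
  · rw [← dbl_half hx, tplus_dbl]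
    split
    · next h => simp [dbl_lt_dbl1, h]
    · next h => simp [h]
  · rw [← dbl1_half hx, tplus_dbl1]
    split
    · next h =>
      simp only [dbl1_mod]
      constructor
      · intro hlt
        exact absurd (lt_trans hlt (by rw [dbl_lt_dbl1]; exact h)) (lt_irrefl _)
      · rintro ⟨h0, -⟩; omega
    · simp

lemma tplus_lt_iff (σ : Equiv.Perm (Fin n)) (x : Fin (2 * n)) :
    tplus σ x < x ↔ x.1 % 2 = 1 ∧ σ.symm (half x) ≤ half x := by
  rcases Nat.mod_two_eq_zero_or_one x.1 with hx | hx
  · rw [← dbl_half hx, tplus_dbl]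
    split
    · next h =>
      simp only [dbl_mod]
      constructor
      · intro hlt
        exact absurd (lt_trans hlt (dbl_lt_dbl1.2 h)) (lt_irrefl _)
      · rintro ⟨h0, -⟩; omega
    · next h => simp [h]
  · rw [← dbl1_half hx, tplus_dbl1]
    split
    · next h => simp [dbl_lt_dbl1, h]
    · next h => simp [h]

lemma tminus_lt_iff (σ : Equiv.Perm (Fin n)) (x : Fin (2 * n)) :
    tminus σ x < x ↔ x.1 % 2 = 0 ∧ σ (half x) < half x := by
  rcases Nat.mod_two_eq_zero_or_one x.1 with hx | hx
  · rw [← dbl_half hx, tminus_dbl]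
    split
    · next h => simp [dbl1_lt_dbl, h]
    · next h => simp [h]
  · rw [← dbl1_half hx, tminus_dbl1]
    split
    · next h =>
      simp only [dbl1_mod]
      constructor
      · intro hlt
        exact absurd (lt_trans hlt (by rw [dbl1_lt_dbl]; exact h)) (lt_irrefl _)
      · rintro ⟨h0, -⟩; omega
    · simp

lemma lt_tminus_iff (σ : Equiv.Perm (Fin n)) (x : Fin (2 * n)) :
    x < tminus σ x ↔ x.1 % 2 = 1 ∧ half x < σ.symm (half x) := by
  rcases Nat.mod_two_eq_zero_or_one x.1 with hx | hx
  · rw [← dbl_half hx, tminus_dbl]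
    split
    · next h =>
      simp only [dbl_mod]
      constructor
      · intro hlt
        exact absurd (lt_trans hlt (dbl1_lt_dbl.2 h)) (lt_irrefl _)
      · rintro ⟨h0, -⟩; omega
    · next h => simp [h]
  · rw [← dbl1_half hx, tminus_dbl1]
    split
    · next h => simp [dbl1_lt_dbl, h]
    · next h => simp [h]

lemma minDiff_mpart {m : ℕ} (τ : Fin m → Fin m) (hτ : Function.Involutive τ) :
    blockMin (mpart τ hτ) \ blockMax (mpart τ hτ) = {x | x < τ x} := by
  ext x
  simp only [Set.mem_diff, Set.mem_setOf_eq, blockMin_mpart, blockMax_mpart]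
  exact lt_iff_le_not_ge.symm

lemma maxDiff_mpart {m : ℕ} (τ : Fin m → Fin m) (hτ : Function.Involutive τ) :
    blockMax (mpart τ hτ) \ blockMin (mpart τ hτ) = {x | τ x < x} := by
  ext x
  simp only [Set.mem_diff, Set.mem_setOf_eq, blockMin_mpart, blockMax_mpart]
  constructor
  · rintro ⟨h1, h2⟩; exact lt_of_le_not_ge h1 h2
  · intro h; exact ⟨le_of_lt h, not_le_of_gt h⟩

lemma fwd_even (S : ColoredPerm n r) :
    {x : Fin (2 * n) | x.1 % 2 = 0} =
      (blockMin (fwdPlus S).P \ blockMax (fwdPlus S).P) ∪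
      (blockMax (fwdMinus S).P \ blockMin (fwdMinus S).P) := by
  rw [fwdPlus, fwdMinus, minDiff_mpart, maxDiff_mpart]
  ext x
  simp only [Set.mem_setOf_eq, Set.mem_union, lt_tplus_iff, tminus_lt_iff]
  constructor
  · intro hx
    rcases le_or_gt (half x) (S.sigma (half x)) with h | h
    · exact Or.inl ⟨hx, h⟩
    · exact Or.inr ⟨hx, h⟩
  · rintro (⟨hx, -⟩ | ⟨hx, -⟩) <;> exact hx

lemma fwd_even_disj (S : ColoredPerm n r) :
    Disjoint (blockMin (fwdPlus S).P \ blockMax (fwdPlus S).P)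
      (blockMax (fwdMinus S).P \ blockMin (fwdMinus S).P) := by
  rw [fwdPlus, fwdMinus, minDiff_mpart, maxDiff_mpart]
  rw [Set.disjoint_left]
  intro x h1 h2
  rw [Set.mem_setOf_eq, lt_tplus_iff] at h1
  rw [Set.mem_setOf_eq, tminus_lt_iff] at h2
  exact absurd (lt_of_le_of_lt h1.2 h2.2) (lt_irrefl _)

lemma fwd_odd (S : ColoredPerm n r) :
    {x : Fin (2 * n) | x.1 % 2 = 1} =
      (blockMax (fwdPlus S).P \ blockMin (fwdPlus S).P) ∪
      (blockMin (fwdMinus S).P \ blockMax (fwdMinus S).P) := by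
  rw [fwdPlus, fwdMinus, minDiff_mpart, maxDiff_mpart]
  ext x
  simp only [Set.mem_setOf_eq, Set.mem_union, tplus_lt_iff, lt_tminus_iff]
  constructor
  · intro hx
    rcases le_or_gt (S.sigma.symm (half x)) (half x) with h | h
    · exact Or.inl ⟨hx, h⟩
    · exact Or.inr ⟨hx, h⟩
  · rintro (⟨hx, -⟩ | ⟨hx, -⟩) <;> exact hx

lemma fwd_odd_disj (S : ColoredPerm n r) :
    Disjoint (blockMax (fwdPlus S).P \ blockMin (fwdPlus S).P)
      (blockMin (fwdMinus S).P \ blockMax (fwdMinus S).P) := by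
  rw [fwdPlus, fwdMinus, minDiff_mpart, maxDiff_mpart]
  rw [Set.disjoint_left]
  intro x h1 h2
  rw [Set.mem_setOf_eq, tplus_lt_iff] at h1
  rw [Set.mem_setOf_eq, lt_tminus_iff] at h2
  exact absurd (lt_of_le_of_lt h1.2 h2.2) (lt_irrefl _)

end FwdSets

section Backward
variable {n r : ℕ}

/-- Pointwise conditions on the pair of matchings. -/
structure BCond (Pp Pm : Finpartition (Finset.univ : Finset (Fin (2 * n)))) : Prop where
  hM1 : IsMatching Pp
  hM2 : IsMatching Pm
  hE : ∀ x : Fin (2 * n), x.1 % 2 = 0 ↔ (x < mtau Pp x ∨ mtau Pm x < x)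
  hED : ∀ x : Fin (2 * n), ¬(x < mtau Pp x ∧ mtau Pm x < x)
  hO : ∀ x : Fin (2 * n), x.1 % 2 = 1 ↔ (mtau Pp x < x ∨ x < mtau Pm x)
  hOD : ∀ x : Fin (2 * n), ¬(mtau Pp x < x ∧ x < mtau Pm x)

lemma minDiff_eq {m : ℕ} {P : Finpartition (Finset.univ : Finset (Fin m))}
    (hM : IsMatching P) : blockMin P \ blockMax P = {x | x < mtau P x} := by
  conv_lhs => rw [← mpart_mtau P hM]
  rw [minDiff_mpart]

lemma maxDiff_eq {m : ℕ} {P : Finpartition (Finset.univ : Finset (Fin m))}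
    (hM : IsMatching P) : blockMax P \ blockMin P = {x | mtau P x < x} := by
  conv_lhs => rw [← mpart_mtau P hM]
  rw [maxDiff_mpart]

lemma BCond.ofSets {Pp Pm : Finpartition (Finset.univ : Finset (Fin (2 * n)))}
    (hM1 : IsMatching Pp) (hM2 : IsMatching Pm)
    (hE : {x : Fin (2 * n) | x.1 % 2 = 0} = (blockMin Pp \ blockMax Pp) ∪ (blockMax Pm \ blockMin Pm))
    (hED : Disjoint (blockMin Pp \ blockMax Pp) (blockMax Pm \ blockMin Pm))
    (hO : {x : Fin (2 * n) | x.1 % 2 = 1} = (blockMax Pp \ blockMin Pp) ∪ (blockMin Pm \ blockMax Pm))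
    (hOD : Disjoint (blockMax Pp \ blockMin Pp) (blockMin Pm \ blockMax Pm)) :
    BCond Pp Pm := by
  rw [minDiff_eq hM1, maxDiff_eq hM2] at hE hED
  rw [maxDiff_eq hM1, minDiff_eq hM2] at hO hOD
  constructor
  · exact hM1
  · exact hM2
  · intro x
    have h : x ∈ {y : Fin (2 * n) | y.1 % 2 = 0} ↔
        x ∈ ({y | y < mtau Pp y} ∪ {y | mtau Pm y < y} : Set (Fin (2 * n))) := by rw [hE]
    simpa using h
  · intro x hx
    exact Set.disjoint_left.1 hED hx.1 hx.2
  · intro x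
    have h : x ∈ {y : Fin (2 * n) | y.1 % 2 = 1} ↔
        x ∈ ({y | mtau Pp y < y} ∪ {y | y < mtau Pm y} : Set (Fin (2 * n))) := by rw [hO]
    simpa using h
  · intro x hx
    exact Set.disjoint_left.1 hOD hx.1 hx.2

variable {Pp Pm : Finpartition (Finset.univ : Finset (Fin (2 * n)))}

/-- The permutation underlying the inverse map. -/
noncomputable def bwdSig (Pp Pm : Finpartition (Finset.univ : Finset (Fin (2 * n))))
    (i : Fin n) : Fin n :=
  if dbl i < mtau Pp (dbl i) then half (mtau Pp (dbl i)) else half (mtau Pm (dbl i))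

lemma bwdA (hc : BCond Pp Pm) {i : Fin n} (h : dbl i < mtau Pp (dbl i)) :
    mtau Pp (dbl i) = dbl1 (bwdSig Pp Pm i) ∧ i ≤ bwdSig Pp Pm i := by
  have hodd : (mtau Pp (dbl i)).1 % 2 = 1 := by
    apply (hc.hO (mtau Pp (dbl i))).2
    left
    rw [mtau_invol Pp hc.hM1 (dbl i)]
    exact h
  rw [bwdSig, if_pos h]
  refine ⟨(dbl1_half hodd).symm, ?_⟩
  rw [← dbl_lt_dbl1, dbl1_half hodd]
  exact h

lemma bwdB (hc : BCond Pp Pm) {i : Fin n} (h : ¬dbl i < mtau Pp (dbl i)) :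
    mtau Pm (dbl i) = dbl1 (bwdSig Pp Pm i) ∧ bwdSig Pp Pm i < i ∧
      mtau Pm (dbl i) < dbl i := by
  have hlt : mtau Pm (dbl i) < dbl i := by
    rcases (hc.hE (dbl i)).1 (dbl_mod i) with h' | h'
    · exact absurd h' h
    · exact h'
  have hodd : (mtau Pm (dbl i)).1 % 2 = 1 := by
    apply (hc.hO (mtau Pm (dbl i))).2
    right
    rw [mtau_invol Pm hc.hM2 (dbl i)]
    exact hlt
  rw [bwdSig, if_neg h]
  refine ⟨(dbl1_half hodd).symm, ?_, hlt⟩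
  rw [← dbl1_lt_dbl, dbl1_half hodd]
  exact hlt

lemma bwdSig_inj (hc : BCond Pp Pm) : Function.Injective (bwdSig Pp Pm) := by
  intro i i' he
  by_cases h1 : dbl i < mtau Pp (dbl i) <;> by_cases h2 : dbl i' < mtau Pp (dbl i')
  · have e1 := (bwdA hc h1).1
    have e2 := (bwdA hc h2).1
    rw [he] at e1
    have := congrArg (mtau Pp) (e1.trans e2.symm)
    rw [mtau_invol Pp hc.hM1, mtau_invol Pp hc.hM1] at this
    exact dbl_inj.1 this
  · exfalso
    have e1 := (bwdA hc h1).1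
    obtain ⟨e2, -, hlt2⟩ := bwdB hc h2
    have e2' : mtau Pm (dbl i') = dbl1 (bwdSig Pp Pm i) := by rw [e2, he]
    apply hc.hOD (dbl1 (bwdSig Pp Pm i))
    constructor
    · rw [show mtau Pp (dbl1 (bwdSig Pp Pm i)) = dbl i by
        rw [← e1, mtau_invol Pp hc.hM1], ← e1]
      exact h1
    · rw [show mtau Pm (dbl1 (bwdSig Pp Pm i)) = dbl i' by
        rw [← e2', mtau_invol Pm hc.hM2]]
      rw [← e2']
      exact hlt2
  · exfalso
    have e1 := (bwdA hc h2).1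
    obtain ⟨e2, -, hlt2⟩ := bwdB hc h1
    have e2' : mtau Pm (dbl i) = dbl1 (bwdSig Pp Pm i') := by rw [e2, he]
    apply hc.hOD (dbl1 (bwdSig Pp Pm i'))
    constructor
    · rw [show mtau Pp (dbl1 (bwdSig Pp Pm i')) = dbl i' by
        rw [← e1, mtau_invol Pp hc.hM1], ← e1]
      exact h2
    · rw [show mtau Pm (dbl1 (bwdSig Pp Pm i')) = dbl i by
        rw [← e2', mtau_invol Pm hc.hM2]]
      rw [← e2']
      exact hlt2
  · have e1 := (bwdB hc h1).1
    have e2 := (bwdB hc h2).1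
    rw [he] at e1
    have := congrArg (mtau Pm) (e1.trans e2.symm)
    rw [mtau_invol Pm hc.hM2, mtau_invol Pm hc.hM2] at this
    exact dbl_inj.1 this

noncomputable def bwdEquiv (hc : BCond Pp Pm) : Equiv.Perm (Fin n) :=
  Equiv.ofBijective (bwdSig Pp Pm) (Finite.injective_iff_bijective.mp (bwdSig_inj hc))

lemma bwd_arc_plus (hc : BCond Pp Pm) {i : Fin n} (h : i ≤ bwdSig Pp Pm i) :
    IsArc Pp (dbl i) (dbl1 (bwdSig Pp Pm i)) := by
  by_cases h1 : dbl i < mtau Pp (dbl i)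
  · exact (isArc_mtau hc.hM1).2 ⟨dbl_lt_dbl1.2 h, (bwdA hc h1).1⟩
  · exact absurd h (not_le_of_gt (bwdB hc h1).2.1)

lemma bwd_arc_minus (hc : BCond Pp Pm) {i : Fin n} (h : bwdSig Pp Pm i < i) :
    IsArc Pm (dbl1 (bwdSig Pp Pm i)) (dbl i) := by
  by_cases h1 : dbl i < mtau Pp (dbl i)
  · exact absurd (bwdA hc h1).2 (not_le_of_gt h)
  · refine (isArc_mtau hc.hM2).2 ⟨dbl1_lt_dbl.2 h, ?_⟩
    rw [← (bwdB hc h1).1, mtau_invol Pm hc.hM2]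

/-- The inverse map on colored objects. -/
noncomputable def bwdPerm (Λp Λm : ColoredPartition (2 * n) r)
    (hc : BCond Λp.P Λm.P) : ColoredPerm n r where
  sigma := bwdEquiv hc
  cplus := fun i h => Λp.color (dbl i) (dbl1 (bwdSig Λp.P Λm.P i)) (bwd_arc_plus hc h)
  cminus := fun i h => Λm.color (dbl1 (bwdSig Λp.P Λm.P i)) (dbl i) (bwd_arc_minus hc h)

end Backward

section RoundTrip
variable {n r : ℕ} {Pp Pm : Finpartition (Finset.univ : Finset (Fin (2 * n)))}

set_option maxHeartbeats 1000000 in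
lemma bwdEquiv_apply (hc : BCond Pp Pm) (i : Fin n) :
    bwdEquiv hc i = bwdSig Pp Pm i := rfl

lemma tplus_bwd (hc : BCond Pp Pm) : tplus (bwdEquiv hc) = mtau Pp := by
  funext x
  rcases Nat.mod_two_eq_zero_or_one x.1 with hx | hx
  · rw [← dbl_half hx, tplus_dbl]
    by_cases h1 : dbl (half x) < mtau Pp (dbl (half x))
    · obtain ⟨e, hle⟩ := bwdA hc h1
      rw [if_pos (by rw [bwdEquiv_apply]; exact hle), bwdEquiv_apply, ← e]
    · obtain ⟨e, hlt, hlt2⟩ := bwdB hc h1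
      rw [if_neg (by rw [bwdEquiv_apply]; exact not_le.2 hlt)]
      have h3 : ¬ mtau Pp (dbl (half x)) < dbl (half x) := by
        intro hcon
        have := (hc.hO (dbl (half x))).2 (Or.inl hcon)
        have := dbl_mod (half x)
        omega
      exact le_antisymm (not_lt.1 h3) (not_lt.1 h1)
  · rw [← dbl1_half hx, tplus_dbl1]
    set m := half x with hm
    set i := (bwdEquiv hc).symm m with hi
    have hσi : bwdSig Pp Pm i = m := by
      rw [← bwdEquiv_apply hc]
      exact (bwdEquiv hc).apply_symm_apply m
    by_cases hle : i ≤ m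
    · rw [if_pos hle]
      by_cases h1 : dbl i < mtau Pp (dbl i)
      · obtain ⟨e, -⟩ := bwdA hc h1
        have he : mtau Pp (dbl i) = dbl1 m := by rw [e, hσi]
        rw [← he, mtau_invol Pp hc.hM1]
      · exfalso
        obtain ⟨-, hlt, -⟩ := bwdB hc h1
        rw [hσi] at hlt
        exact absurd hle (not_le.2 hlt)
    · rw [if_neg hle]
      push_neg at hle
      by_cases h1 : dbl i < mtau Pp (dbl i)
      · exfalso
        obtain ⟨-, hle2⟩ := bwdA hc h1
        rw [hσi] at hle2
        exact absurd hle2 (not_le.2 hle)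
      · obtain ⟨e, -, hlt2⟩ := bwdB hc h1
        have hx2 : mtau Pm (dbl i) = dbl1 m := by rw [e, hσi]
        have hmx : mtau Pm (dbl1 m) = dbl i := by rw [← hx2, mtau_invol Pm hc.hM2]
        have h2 : ¬ dbl1 m < mtau Pp (dbl1 m) := by
          intro hcon
          have := (hc.hE (dbl1 m)).2 (Or.inl hcon)
          have := dbl1_mod m
          omega
        have h3 : ¬ mtau Pp (dbl1 m) < dbl1 m := by
          intro hcon
          apply hc.hOD (dbl1 m)
          refine ⟨hcon, ?_⟩
          rw [hmx]
          rw [hx2] at hlt2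
          exact hlt2
        exact le_antisymm (not_lt.1 h3) (not_lt.1 h2)

lemma tminus_bwd (hc : BCond Pp Pm) : tminus (bwdEquiv hc) = mtau Pm := by
  funext x
  rcases Nat.mod_two_eq_zero_or_one x.1 with hx | hx
  · rw [← dbl_half hx, tminus_dbl]
    by_cases h1 : dbl (half x) < mtau Pp (dbl (half x))
    · obtain ⟨e, hle⟩ := bwdA hc h1
      rw [if_neg (by rw [bwdEquiv_apply]; exact not_lt.2 hle)]
      have h2 : ¬ mtau Pm (dbl (half x)) < dbl (half x) := by
        intro hcon
        exact hc.hED (dbl (half x)) ⟨h1, hcon⟩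
      have h3 : ¬ dbl (half x) < mtau Pm (dbl (half x)) := by
        intro hcon
        have := (hc.hO (dbl (half x))).2 (Or.inr hcon)
        have := dbl_mod (half x)
        omega
      exact le_antisymm (not_lt.1 h2) (not_lt.1 h3)
    · obtain ⟨e, hlt, hlt2⟩ := bwdB hc h1
      rw [if_pos (by rw [bwdEquiv_apply]; exact hlt), bwdEquiv_apply, ← e]
  · rw [← dbl1_half hx, tminus_dbl1]
    set m := half x with hm
    set i := (bwdEquiv hc).symm m with hi
    have hσi : bwdSig Pp Pm i = m := by
      rw [← bwdEquiv_apply hc]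
      exact (bwdEquiv hc).apply_symm_apply m
    by_cases hlt : m < i
    · rw [if_pos hlt]
      by_cases h1 : dbl i < mtau Pp (dbl i)
      · exfalso
        obtain ⟨-, hle2⟩ := bwdA hc h1
        rw [hσi] at hle2
        exact absurd hle2 (not_le.2 hlt)
      · obtain ⟨e, -, -⟩ := bwdB hc h1
        have hx2 : mtau Pm (dbl i) = dbl1 m := by rw [e, hσi]
        rw [← hx2, mtau_invol Pm hc.hM2]
    · rw [if_neg hlt]
      push_neg at hlt
      by_cases h1 : dbl i < mtau Pp (dbl i)
      · obtain ⟨e, -⟩ := bwdA hc h1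
        have hx2 : mtau Pp (dbl i) = dbl1 m := by rw [e, hσi]
        have hmx : mtau Pp (dbl1 m) = dbl i := by rw [← hx2, mtau_invol Pp hc.hM1]
        have h2 : ¬ mtau Pm (dbl1 m) < dbl1 m := by
          intro hcon
          have := (hc.hE (dbl1 m)).2 (Or.inr hcon)
          have := dbl1_mod m
          omega
        have h3 : ¬ dbl1 m < mtau Pm (dbl1 m) := by
          intro hcon
          apply hc.hOD (dbl1 m)
          refine ⟨?_, hcon⟩
          rw [hmx]
          exact dbl_lt_dbl1.2 hlt
        exact le_antisymm (not_lt.1 h2) (not_lt.1 h3)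
      · exfalso
        obtain ⟨-, hlt2, -⟩ := bwdB hc h1
        rw [hσi] at hlt2
        exact absurd hlt (not_le.2 hlt2)

lemma mpart_congr {m : ℕ} {τ τ' : Fin m → Fin m} (h : τ = τ')
    (hτ : Function.Involutive τ) (hτ' : Function.Involutive τ') :
    mpart τ hτ = mpart τ' hτ' := by subst h; rfl

lemma cp_ext {Λ Λ' : ColoredPartition n r} (hP : Λ.P = Λ'.P)
    (hcol : ∀ i j (h : IsArc Λ.P i j) (h' : IsArc Λ'.P i j),
      Λ.color i j h = Λ'.color i j h') : Λ = Λ' := by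
  obtain ⟨P, c⟩ := Λ
  obtain ⟨P', c'⟩ := Λ'
  simp only at hP
  subst hP
  simp only [ColoredPartition.mk.injEq, heq_eq_eq, true_and]
  funext i j h
  exact hcol i j h h

lemma perm_ext {S S' : ColoredPerm n r} (hσ : S.sigma = S'.sigma)
    (hp : ∀ i (h : i ≤ S.sigma i) (h' : i ≤ S'.sigma i), S.cplus i h = S'.cplus i h')
    (hm : ∀ i (h : S.sigma i < i) (h' : S'.sigma i < i), S.cminus i h = S'.cminus i h') :
    S = S' := by
  obtain ⟨σ, cp, cm⟩ := S
  obtain ⟨σ', cp', cm'⟩ := S'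
  simp only at hσ hp hm
  subst hσ
  simp only [ColoredPerm.mk.injEq, heq_eq_eq, true_and]
  constructor
  · funext i h
    exact hp i h h
  · funext i h
    exact hm i h h

set_option maxHeartbeats 2000000 in
lemma fwdPlus_bwd (Λp Λm : ColoredPartition (2 * n) r) (hc : BCond Λp.P Λm.P) :
    fwdPlus (bwdPerm Λp Λm hc) = Λp := by
  have hP : (fwdPlus (bwdPerm Λp Λm hc)).P = Λp.P := by
    show mpart (tplus (bwdEquiv hc)) (tplus_invol _) = Λp.P
    rw [mpart_congr (tplus_bwd hc) _ (by rw [← tplus_bwd hc]; exact tplus_invol _)]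
    exact mpart_mtau Λp.P hc.hM1
  apply cp_ext hP
  intro a b h h'
  obtain ⟨i, hi, ha, hb⟩ := arc_tplus.1 h
  show Λp.color (dbl (half a)) (dbl1 (bwdSig Λp.P Λm.P (half a))) _ = Λp.color a b h'
  apply color_congr
  · rw [ha, half_dbl]
  · rw [ha, half_dbl, hb]
    rfl

set_option maxHeartbeats 2000000 in
lemma fwdMinus_bwd (Λp Λm : ColoredPartition (2 * n) r) (hc : BCond Λp.P Λm.P) :
    fwdMinus (bwdPerm Λp Λm hc) = Λm := by
  have hP : (fwdMinus (bwdPerm Λp Λm hc)).P = Λm.P := by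
    show mpart (tminus (bwdEquiv hc)) (tminus_invol _) = Λm.P
    rw [mpart_congr (tminus_bwd hc) _ (by rw [← tminus_bwd hc]; exact tminus_invol _)]
    exact mpart_mtau Λm.P hc.hM2
  apply cp_ext hP
  intro a b h h'
  obtain ⟨i, hi, ha, hb⟩ := arc_tminus.1 h
  show Λm.color (dbl1 (bwdSig Λp.P Λm.P (half b))) (dbl (half b)) _ = Λm.color a b h'
  apply color_congr
  · rw [hb, half_dbl, ha]
    rfl
  · rw [hb, half_dbl]

/-- The image of the forward map satisfies the matching pair conditions. -/
lemma fwdCond (S : ColoredPerm n r) : BCond (fwdPlus S).P (fwdMinus S).P :=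
  BCond.ofSets isMatching_mpart isMatching_mpart (fwd_even S) (fwd_even_disj S)
    (fwd_odd S) (fwd_odd_disj S)

set_option maxHeartbeats 2000000 in
lemma bwd_fwd (S : ColoredPerm n r) (hc : BCond (fwdPlus S).P (fwdMinus S).P) :
    bwdPerm (fwdPlus S) (fwdMinus S) hc = S := by
  have htp : mtau (fwdPlus S).P = tplus S.sigma := mtau_mpart _ _
  have htm : mtau (fwdMinus S).P = tminus S.sigma := mtau_mpart _ _
  have hsig : ∀ i, bwdSig (fwdPlus S).P (fwdMinus S).P i = S.sigma i := by
    intro i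
    rw [bwdSig, htp, htm]
    by_cases hi : i ≤ S.sigma i
    · rw [if_pos (by rw [tplus_dbl, if_pos hi]; exact dbl_lt_dbl1.2 hi)]
      rw [tplus_dbl, if_pos hi, half_dbl1]
    · push_neg at hi
      rw [if_neg (by rw [tplus_dbl, if_neg (not_le.2 hi)]; exact lt_irrefl _)]
      rw [tminus_dbl, if_pos hi, half_dbl1]
  apply perm_ext
  · apply Equiv.ext
    intro i
    rw [show (bwdPerm (fwdPlus S) (fwdMinus S) hc).sigma = bwdEquiv hc from rfl,
      bwdEquiv_apply, hsig]
  · intro i h h'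
    show S.cplus (half (dbl i)) _ = S.cplus i h'
    exact cplus_congr S (half_dbl i) _ _
  · intro i h h'
    show S.cminus (half (dbl i)) _ = S.cminus i h'
    exact cminus_congr S (half_dbl i) _ _

end RoundTrip

section Assemble
variable {n r : ℕ}

lemma BCond.ofPair {Λp Λm : ColoredPartition (2 * n) r} {A B C D : Prop}
    (h : IsMatching Λp.P ∧ IsMatching Λm.P ∧ A ∧ B ∧ C ∧ D ∧
      {x : Fin (2 * n) | x.1 % 2 = 0} =
        (blockMin Λp.P \ blockMax Λp.P) ∪ (blockMax Λm.P \ blockMin Λm.P) ∧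
      Disjoint (blockMin Λp.P \ blockMax Λp.P) (blockMax Λm.P \ blockMin Λm.P) ∧
      {x : Fin (2 * n) | x.1 % 2 = 1} =
        (blockMax Λp.P \ blockMin Λp.P) ∪ (blockMin Λm.P \ blockMax Λm.P) ∧
      Disjoint (blockMax Λp.P \ blockMin Λp.P) (blockMin Λm.P \ blockMax Λm.P)) :
    BCond Λp.P Λm.P := by
  obtain ⟨hM1, hM2, -, -, -, -, hE, hED, hO, hOD⟩ := h
  exact BCond.ofSets hM1 hM2 hE hED hO hOD

lemma bwd_mem {j k : ℕ} (Λp Λm : ColoredPartition (2 * n) r) (hc : BCond Λp.P Λm.P)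
    (hc1 : ¬HasCrossing Λp j) (hn1 : ¬HasNesting Λp k)
    (hc2 : ¬HasCrossing Λm j) (hn2 : ¬HasNesting Λm k) :
    ¬PermHasCrossing (bwdPerm Λp Λm hc) j ∧ ¬PermHasNesting (bwdPerm Λp Λm hc) k := by
  constructor
  · intro h
    rcases permHasCrossing_iff.1 h with h' | h'
    · rw [fwdPlus_bwd] at h'
      exact hc1 h'
    · rw [fwdMinus_bwd] at h'
      exact hc2 h'
  · intro h
    rcases permHasNesting_iff.1 h with h' | h'
    · rw [fwdPlus_bwd] at h'
      exact hn1 h'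
    · rw [fwdMinus_bwd] at h'
      exact hn2 h'

end Assemble

/-- Bijection from `r`-colored `j`-noncrossing `k`-nonnesting permutations of `[n]`
to pairs `(Λ⁺, Λ⁻)` of `r`-colored `j`-noncrossing `k`-nonnesting matchings of `[2n]`
with the odd numbers (0-based: even indices) the disjoint union of
`min(Λ⁺)∖max(Λ⁺)` and `max(Λ⁻)∖min(Λ⁻)`, and the even numbers the disjoint union of
`max(Λ⁺)∖min(Λ⁺)` and `min(Λ⁻)∖max(Λ⁻)`. -/
theorem stmt16 (n r j k : ℕ) (hn : 0 < n) (hr : 0 < r) (hj : 0 < j) (hk : 0 < k) :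
    Nonempty
      ({S : ColoredPerm n r // ¬PermHasCrossing S j ∧ ¬PermHasNesting S k} ≃
        {p : ColoredPartition (2 * n) r × ColoredPartition (2 * n) r //
          IsMatching p.1.P ∧ IsMatching p.2.P ∧
          ¬HasCrossing p.1 j ∧ ¬HasNesting p.1 k ∧
          ¬HasCrossing p.2 j ∧ ¬HasNesting p.2 k ∧
          {x : Fin (2 * n) | x.1 % 2 = 0} =
            (blockMin p.1.P \ blockMax p.1.P) ∪ (blockMax p.2.P \ blockMin p.2.P) ∧
          Disjoint (blockMin p.1.P \ blockMax p.1.P) (blockMax p.2.P \ blockMin p.2.P) ∧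
          {x : Fin (2 * n) | x.1 % 2 = 1} =
            (blockMax p.1.P \ blockMin p.1.P) ∪ (blockMin p.2.P \ blockMax p.2.P) ∧
          Disjoint (blockMax p.1.P \ blockMin p.1.P) (blockMin p.2.P \ blockMax p.2.P)}) := by
  refine ⟨{
    toFun := fun S =>
      ⟨(fwdPlus S.1, fwdMinus S.1),
        isMatching_mpart, isMatching_mpart,
        fun hcr => S.2.1 (permHasCrossing_iff.2 (Or.inl hcr)),
        fun hne => S.2.2 (permHasNesting_iff.2 (Or.inl hne)),
        fun hcr => S.2.1 (permHasCrossing_iff.2 (Or.inr hcr)),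
        fun hne => S.2.2 (permHasNesting_iff.2 (Or.inr hne)),
        fwd_even S.1, fwd_even_disj S.1, fwd_odd S.1, fwd_odd_disj S.1⟩
    invFun := fun p =>
      ⟨bwdPerm p.1.1 p.1.2 (BCond.ofPair p.2),
        (bwd_mem p.1.1 p.1.2 _ p.2.2.2.1 p.2.2.2.2.1 p.2.2.2.2.2.1 p.2.2.2.2.2.2.1).1,
        (bwd_mem p.1.1 p.1.2 _ p.2.2.2.1 p.2.2.2.2.1 p.2.2.2.2.2.1 p.2.2.2.2.2.2.1).2⟩
    left_inv := fun S => Subtype.ext (bwd_fwd S.1 _)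
    right_inv := fun p => Subtype.ext (by
      show (fwdPlus _, fwdMinus _) = p.1
      rw [fwdPlus_bwd p.1.1 p.1.2 (BCond.ofPair p.2),
        fwdMinus_bwd p.1.1 p.1.2 (BCond.ofPair p.2)]) }⟩
end
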